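/- arXiv:1005.1338 — 8 statements merged into one kernel-verified Lean document; each statement's English description precedes it below -/
import Mathlib

section
/- For every β > 0 and every θ ∈ ℝ, the U(1) heat kernel is strictly positive: K₁(θ, β) > 0. -/
open Real

/-- The `U(1)` heat kernel `K₁(θ, β) = Σ_{n ∈ ℤ} exp(2πinθ − (2πn)²β)`, written in its
real-valued form `Σ_{n ∈ ℤ} e^{−(2πn)²β} cos(2πnθ)` (the imaginary parts of the `n` and `−n`
terms cancel). -/
noncomputable def K1 (θ β : ℝ) : ℝ :=
  ∑' n : ℤ, Real.exp (-((2 * Real.pi * (n : ℝ)) ^ 2 * β)) * Real.cos (2 * Real.pi * (n : ℝ) * θ)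

/-- For every `β > 0` and every `θ`, the `U(1)` heat kernel is strictly positive. -/
theorem u1_heat_kernel_pos (β : ℝ) (hβ : 0 < β) (θ : ℝ) : 0 < K1 θ β := by
  have ha : (0 : ℝ) < 4 * π * β := by positivity
  set a : ℝ := 4 * π * β with ha_def
  have key := Complex.tsum_exp_neg_quadratic (a := (a : ℂ))
    (by simpa using ha) (Complex.I * θ)
  -- rewrite each LHS term as exp of (real) + (real)*I
  have hterm : ∀ n : ℤ, Complex.exp (-↑π * ↑a * (n : ℂ) ^ 2 + 2 * ↑π * (Complex.I * ↑θ) * (n : ℂ))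
      = Complex.exp (((-(π * a * (n : ℝ) ^ 2) : ℝ) : ℂ)
          + ((2 * π * (n : ℝ) * θ : ℝ) : ℂ) * Complex.I) := by
    intro n
    congr 1
    push_cast
    ring
  -- summability of the LHS
  have hsum : Summable fun n : ℤ ↦
      Complex.exp (-↑π * ↑a * (n : ℂ) ^ 2 + 2 * ↑π * (Complex.I * ↑θ) * (n : ℂ)) := by
    apply Summable.of_norm
    have h0 : Summable (HurwitzKernelBounds.f_int 0 0 a) :=
      HurwitzKernelBounds.summable_f_int 0 0 ha
    refine h0.congr fun n ↦ ?_
    rw [HurwitzKernelBounds.f_int, hterm n, Complex.norm_exp]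
    simp only [pow_zero, one_mul, add_zero, Complex.add_re, Complex.ofReal_re, Complex.mul_re,
      Complex.I_re, Complex.I_im, Complex.ofReal_im, mul_zero, mul_one, zero_sub]
    ring_nf
  -- the real part of the LHS is `K1 θ β`
  have hre : (∑' n : ℤ, Complex.exp (-↑π * ↑a * (n : ℂ) ^ 2
      + 2 * ↑π * (Complex.I * ↑θ) * (n : ℂ))).re = K1 θ β := by
    rw [Complex.re_tsum hsum, K1]
    refine tsum_congr fun n ↦ ?_
    rw [hterm n, Complex.exp_re]
    have h1 : ((((-(π * a * (n : ℝ) ^ 2) : ℝ) : ℂ))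
        + ((2 * π * (n : ℝ) * θ : ℝ) : ℂ) * Complex.I).re = -((2 * π * (n : ℝ)) ^ 2 * β) := by
      simp only [Complex.add_re, Complex.ofReal_re, Complex.mul_I_re, Complex.ofReal_im,
        neg_zero, add_zero, ha_def]
      ring
    have h2 : ((((-(π * a * (n : ℝ) ^ 2) : ℝ) : ℂ))
        + ((2 * π * (n : ℝ) * θ : ℝ) : ℂ) * Complex.I).im = 2 * π * (n : ℝ) * θ := by
      simp only [Complex.add_im, Complex.ofReal_im, Complex.mul_I_im, Complex.ofReal_re,
        zero_add]
    rw [h1, h2]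
  -- the RHS is a positive real number
  have hRHSterm : ∀ n : ℤ, Complex.exp (-↑π / ↑a * ((n : ℂ) + Complex.I * (Complex.I * ↑θ)) ^ 2)
      = ((Real.exp (-π / a * ((n : ℝ) - θ) ^ 2) : ℝ) : ℂ) := by
    intro n
    rw [Complex.ofReal_exp]
    congr 1
    have : (n : ℂ) + Complex.I * (Complex.I * ↑θ) = (((n : ℝ) - θ : ℝ) : ℂ) := by
      rw [show Complex.I * (Complex.I * (θ : ℂ)) = Complex.I * Complex.I * (θ : ℂ) by ring,
        Complex.I_mul_I]
      push_cast
      ring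
    rw [this]
    push_cast
    ring
  have hposRHS : 0 < (1 / (a : ℂ) ^ (1 / 2 : ℂ)
      * ∑' n : ℤ, Complex.exp (-↑π / ↑a * ((n : ℂ) + Complex.I * (Complex.I * ↑θ)) ^ 2)).re := by
    have hcpow : ((a : ℂ)) ^ (1 / 2 : ℂ) = ((a ^ (1 / 2 : ℝ) : ℝ) : ℂ) := by
      rw [show (1 / 2 : ℂ) = (((1 : ℝ) / 2 : ℝ) : ℂ) by norm_num,
        ← Complex.ofReal_cpow ha.le]
    have hts : (∑' n : ℤ, Complex.exp (-↑π / ↑a * ((n : ℂ) + Complex.I * (Complex.I * ↑θ)) ^ 2))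
        = (((∑' n : ℤ, Real.exp (-π / a * ((n : ℝ) - θ) ^ 2)) : ℝ) : ℂ) := by
      rw [Complex.ofReal_tsum]
      exact tsum_congr hRHSterm
    rw [hcpow, hts, ← Complex.ofReal_one, ← Complex.ofReal_div, ← Complex.ofReal_mul,
      Complex.ofReal_re]
    have hsum2 : Summable fun n : ℤ ↦ Real.exp (-π / a * ((n : ℝ) - θ) ^ 2) := by
      have h0 : Summable (HurwitzKernelBounds.f_int 0 (-θ) a⁻¹) :=
        HurwitzKernelBounds.summable_f_int 0 (-θ) (inv_pos.mpr ha)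
      refine h0.congr fun n ↦ ?_
      rw [HurwitzKernelBounds.f_int]
      simp only [pow_zero, one_mul]
      congr 1
      rw [div_eq_mul_inv]
      ring
    refine mul_pos (by positivity) ?_
    exact Summable.tsum_pos hsum2 (fun n ↦ (Real.exp_pos _).le) 0 (Real.exp_pos _)
  rw [← hre, key]
  exact hposRHS
end

section
/- For every β > 0 and all Θ₁, Θ₂, Θ₃, Θ₄ ∈ ℝ, the U(1) heat-kernel densities at time β/4 on the four subdivided plaquettes reproduce, after integrating out the eight internal link variables, the heat-kernel density at time β on the original plaquette: ∫_{[0,1]⁸} K₁(−g₁ + Θ₁ + g₂ − y₂ − y₁, β/4) · K₁(y₂ − g₂ + Θ₂ − g₃ − y₃, β/4) · K₁(y₄ + y₃ + g₃ − Θ₃ − g₄, β/4) · K₁(g₁ + y₁ − y₄ + g₄ − Θ₄, β/4) dg₁ dg₂ dg₃ dg₄ dy₁ dy₂ dy₃ dy₄ = K₁(Θ₁ + Θ₂ − Θ₃ − Θ₄, β). (This is the measure consistency condition for one plaquette subdivision in the U(1) gauge theory, verifying that the rescaling β ↦ β/4 per subdivision yields a consistent family of measures.) -/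
open Real

open MeasureTheory

noncomputable def cterm (n : ℤ) (θ β : ℝ) : ℂ :=
  (Real.exp (-((2 * Real.pi * (n : ℝ)) ^ 2 * β)) : ℂ) *
    Complex.exp ((2 * Real.pi * (n : ℝ) * θ : ℝ) * Complex.I)

lemma norm_cterm (n : ℤ) (θ β : ℝ) :
    ‖cterm n θ β‖ = Real.exp (-((2 * Real.pi * (n : ℝ)) ^ 2 * β)) := by
  rw [cterm, norm_mul, Complex.norm_real, Real.norm_eq_abs,
    Complex.norm_exp_ofReal_mul_I, mul_one, abs_of_pos (Real.exp_pos _)]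

lemma summable_w {β : ℝ} (hβ : 0 < β) :
    Summable fun n : ℤ => Real.exp (-((2 * Real.pi * (n : ℝ)) ^ 2 * β)) := by
  set r : ℝ := Real.exp (-((2 * Real.pi) ^ 2 * β)) with hr
  have hr0 : 0 < r := Real.exp_pos _
  have hr1 : r < 1 := by
    rw [hr, Real.exp_lt_one_iff]
    have : 0 < (2 * Real.pi) ^ 2 * β := by positivity
    linarith
  have hcomp : ∀ n : ℤ, Real.exp (-((2 * Real.pi * (n : ℝ)) ^ 2 * β)) ≤ r ^ n.natAbs := by
    intro n
    rw [hr, ← Real.exp_nat_mul, Real.exp_le_exp]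
    have h0 : (n.natAbs : ℝ) ≤ (n.natAbs : ℝ) ^ 2 := by
      exact_mod_cast Nat.cast_le.mpr (Nat.le_self_pow two_ne_zero n.natAbs)
    have h1 : (n.natAbs : ℝ) ≤ (n : ℝ) ^ 2 := by
      calc (n.natAbs : ℝ) ≤ (n.natAbs : ℝ) ^ 2 := h0
        _ = (n : ℝ) ^ 2 := by rw [Nat.cast_natAbs, Int.cast_abs, sq_abs]
    have hb : 0 ≤ (2 * Real.pi) ^ 2 * β := by positivity
    nlinarith [h1, hb]
  have hgeo : Summable fun n : ℤ => r ^ n.natAbs := by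
    apply Summable.of_nat_of_neg <;>
      simpa using summable_geometric_of_lt_one hr0.le hr1
  exact hgeo.of_nonneg_of_le (fun n => (Real.exp_pos _).le) hcomp

lemma summable_cterm {β : ℝ} (hβ : 0 < β) (θ : ℝ) :
    Summable fun n : ℤ => cterm n θ β := by
  apply Summable.of_norm
  simpa only [norm_cterm] using summable_w hβ

lemma K1_ofReal {β : ℝ} (hβ : 0 < β) (θ : ℝ) :
    (K1 θ β : ℂ) = ∑' n : ℤ, cterm n θ β := by
  have hs := summable_cterm hβ θ
  have hre : ∀ n : ℤ, (cterm n θ β).re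
      = Real.exp (-((2 * Real.pi * (n : ℝ)) ^ 2 * β)) * Real.cos (2 * Real.pi * (n : ℝ) * θ) := by
    intro n
    simp only [cterm, Complex.mul_re, Complex.ofReal_re, Complex.ofReal_im, zero_mul, sub_zero,
      Complex.exp_ofReal_mul_I_re]
  have him : ∀ n : ℤ, (cterm n θ β).im
      = Real.exp (-((2 * Real.pi * (n : ℝ)) ^ 2 * β)) * Real.sin (2 * Real.pi * (n : ℝ) * θ) := by
    intro n
    simp only [cterm, Complex.mul_im, Complex.ofReal_re, Complex.ofReal_im, zero_mul, add_zero,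
      Complex.exp_ofReal_mul_I_im]
  apply Complex.ext
  · rw [Complex.ofReal_re, Complex.re_tsum hs, K1]
    exact tsum_congr fun n => (hre n).symm
  · rw [Complex.ofReal_im, Complex.im_tsum hs]
    set S := ∑' n : ℤ, (cterm n θ β).im with hS
    have hneg : ∀ n : ℤ, (cterm (-n) θ β).im = -(cterm n θ β).im := by
      intro n
      rw [him, him]
      push_cast
      rw [show 2 * Real.pi * (-(n : ℝ)) * θ = -(2 * Real.pi * (n : ℝ) * θ) by ring,
        Real.sin_neg,
        show (2 * Real.pi * (-(n : ℝ))) ^ 2 = (2 * Real.pi * (n : ℝ)) ^ 2 by ring]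
      ring
    have h1 : S = -S := by
      calc S = ∑' n : ℤ, (cterm (-n) θ β).im := ((Equiv.neg ℤ).tsum_eq _).symm
        _ = ∑' n : ℤ, -(cterm n θ β).im := tsum_congr hneg
        _ = -S := tsum_neg
    linarith

lemma integral_cterm_mul (n m : ℤ) (a b β₁ β₂ : ℝ) :
    ∫ t in (0:ℝ)..1, cterm n (a - t) β₁ * cterm m (t + b) β₂ =
      if m = n then cterm n (a + b) (β₁ + β₂) else 0 := by
  have key : ∀ t : ℝ, cterm n (a - t) β₁ * cterm m (t + b) β₂ =
      ((Real.exp (-((2 * Real.pi * (n : ℝ)) ^ 2 * β₁))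
          * Real.exp (-((2 * Real.pi * (m : ℝ)) ^ 2 * β₂)) : ℝ) : ℂ) *
        Complex.exp ((2 * Real.pi * (n : ℝ) * a + 2 * Real.pi * (m : ℝ) * b : ℝ) * Complex.I) *
        Complex.exp (((2 * Real.pi * ((m : ℝ) - (n : ℝ))) * t : ℝ) * Complex.I) := by
    intro t
    simp only [cterm]
    conv_lhs => rw [mul_mul_mul_comm, ← Complex.exp_add]
    conv_rhs => rw [mul_assoc, ← Complex.exp_add]
    rw [Complex.ofReal_mul]
    congr 2 <;> (push_cast; ring)
  rcases eq_or_ne m n with h | h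
  · subst h
    simp only [if_pos rfl, key, sub_self, zero_mul, mul_zero, Complex.ofReal_zero,
      Complex.exp_zero, mul_one, if_true]
    rw [intervalIntegral.integral_const, sub_zero, one_smul, cterm, ← Real.exp_add]
    rw [show -((2 * Real.pi * (m : ℝ)) ^ 2 * β₁) + -((2 * Real.pi * (m : ℝ)) ^ 2 * β₂)
        = -((2 * Real.pi * (m : ℝ)) ^ 2 * (β₁ + β₂)) by ring,
      show (2 * Real.pi * (m : ℝ) * a + 2 * Real.pi * (m : ℝ) * b : ℝ)
        = 2 * Real.pi * (m : ℝ) * (a + b) by ring]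
  · simp only [if_neg h, key]
    rw [intervalIntegral.integral_const_mul]
    have hfun : (fun t : ℝ => Complex.exp (((2 * Real.pi * ((m : ℝ) - (n : ℝ))) * t : ℝ)
        * Complex.I)) = fun t : ℝ =>
          Complex.exp ((((2 * Real.pi * ((m : ℝ) - (n : ℝ)) : ℝ) : ℂ) * Complex.I) * (t : ℝ)) := by
      funext t
      congr 1
      push_cast
      ring
    have hc : (((2 * Real.pi * ((m : ℝ) - (n : ℝ)) : ℝ) : ℂ) * Complex.I) ≠ 0 := by
      refine mul_ne_zero ?_ Complex.I_ne_zero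
      rw [Complex.ofReal_ne_zero]
      have hmn : (m : ℝ) - (n : ℝ) ≠ 0 := sub_ne_zero.mpr (by exact_mod_cast h)
      have h2π : (2 : ℝ) * Real.pi ≠ 0 := by positivity
      exact mul_ne_zero h2π hmn
    rw [hfun, integral_exp_mul_complex hc]
    have hone : Complex.exp ((((2 * Real.pi * ((m : ℝ) - (n : ℝ)) : ℝ) : ℂ) * Complex.I)
        * ((1 : ℝ) : ℂ)) = 1 := by
      rw [show (((2 * Real.pi * ((m : ℝ) - (n : ℝ)) : ℝ) : ℂ) * Complex.I) * ((1 : ℝ) : ℂ)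
          = ((m - n : ℤ) : ℂ) * (2 * (Real.pi : ℂ) * Complex.I) by push_cast; ring]
      exact Complex.exp_int_mul_two_pi_mul_I (m - n)
    rw [hone]
    simp

lemma continuous_cterm (n : ℤ) (β : ℝ) : Continuous fun θ : ℝ => cterm n θ β := by
  unfold cterm
  fun_prop

set_option maxHeartbeats 1000000 in
lemma K1_conv {β₁ β₂ : ℝ} (h₁ : 0 < β₁) (h₂ : 0 < β₂) (a b : ℝ) :
    ∫ t in (0:ℝ)..1, K1 (a - t) β₁ * K1 (t + b) β₂ = K1 (a + b) (β₁ + β₂) := by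
  have h₁₂ : 0 < β₁ + β₂ := by linarith
  have main : ((∫ t in (0:ℝ)..1, K1 (a - t) β₁ * K1 (t + b) β₂ : ℝ) : ℂ)
      = ((K1 (a + b) (β₁ + β₂) : ℝ) : ℂ) := by
    rw [← intervalIntegral.integral_ofReal]
    have step1 : ∀ t : ℝ, ((K1 (a - t) β₁ * K1 (t + b) β₂ : ℝ) : ℂ)
        = ∑' p : ℤ × ℤ, cterm p.1 (a - t) β₁ * cterm p.2 (t + b) β₂ := by
      intro t
      push_cast
      rw [K1_ofReal h₁, K1_ofReal h₂]
      exact tsum_mul_tsum_of_summable_norm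
        (by simpa only [norm_cterm] using summable_w h₁)
        (by simpa only [norm_cterm] using summable_w h₂)
    rw [intervalIntegral.integral_congr (g := fun t =>
      ∑' p : ℤ × ℤ, cterm p.1 (a - t) β₁ * cterm p.2 (t + b) β₂) (fun t _ => step1 t)]
    rw [intervalIntegral.integral_of_le zero_le_one]
    have hmeas : ∀ p : ℤ × ℤ, AEStronglyMeasurable
        (fun t : ℝ => cterm p.1 (a - t) β₁ * cterm p.2 (t + b) β₂)
        (MeasureTheory.volume.restrict (Set.Ioc (0:ℝ) 1)) := by
      intro p
      exact (((continuous_cterm p.1 β₁).comp (by continuity)).mul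
        ((continuous_cterm p.2 β₂).comp (by continuity))).aestronglyMeasurable
    have hnorm : ∀ (p : ℤ × ℤ) (t : ℝ),
        ‖cterm p.1 (a - t) β₁ * cterm p.2 (t + b) β₂‖
          = Real.exp (-((2 * Real.pi * (p.1 : ℝ)) ^ 2 * β₁))
            * Real.exp (-((2 * Real.pi * (p.2 : ℝ)) ^ 2 * β₂)) := by
      intro p t
      rw [norm_mul, norm_cterm, norm_cterm]
    have hsum2 : Summable fun p : ℤ × ℤ =>
        Real.exp (-((2 * Real.pi * (p.1 : ℝ)) ^ 2 * β₁))
          * Real.exp (-((2 * Real.pi * (p.2 : ℝ)) ^ 2 * β₂)) :=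
      (summable_w h₁).mul_of_nonneg (summable_w h₂)
        (fun _ => (Real.exp_pos _).le) (fun _ => (Real.exp_pos _).le)
    rw [MeasureTheory.integral_tsum hmeas ?_]
    · -- now ∑' p, ∫ t in Ioc 0 1 ...
      have hback : ∀ p : ℤ × ℤ,
          (∫ t in Set.Ioc (0:ℝ) 1, cterm p.1 (a - t) β₁ * cterm p.2 (t + b) β₂)
            = if p.2 = p.1 then cterm p.1 (a + b) (β₁ + β₂) else 0 := by
        intro p
        rw [← intervalIntegral.integral_of_le zero_le_one]
        exact integral_cterm_mul p.1 p.2 a b β₁ β₂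
      rw [tsum_congr hback]
      have hi : Function.Injective (fun n : ℤ => ((n, n) : ℤ × ℤ)) := by
        intro x y hxy
        simpa using congrArg Prod.fst hxy
      have hzero : ∀ p : ℤ × ℤ, p ∉ Set.range (fun n : ℤ => ((n, n) : ℤ × ℤ)) →
          (if p.2 = p.1 then cterm p.1 (a + b) (β₁ + β₂) else 0) = 0 := by
        intro p hp
        rw [if_neg]
        intro hpe
        exact hp ⟨p.1, by rw [Prod.ext_iff]; exact ⟨rfl, hpe.symm⟩⟩
      have hcomp : ((fun p : ℤ × ℤ => if p.2 = p.1 then cterm p.1 (a + b) (β₁ + β₂) else 0)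
          ∘ (fun n : ℤ => ((n, n) : ℤ × ℤ))) = fun n : ℤ => cterm n (a + b) (β₁ + β₂) := by
        funext n
        simp
      have hs := (summable_cterm h₁₂ (a + b)).hasSum
      have hs2 : HasSum ((fun p : ℤ × ℤ => if p.2 = p.1 then cterm p.1 (a + b) (β₁ + β₂) else 0)
          ∘ (fun n : ℤ => ((n, n) : ℤ × ℤ))) (∑' n : ℤ, cterm n (a + b) (β₁ + β₂)) := by
        rw [hcomp]; exact hs
      rw [((hi.hasSum_iff hzero).mp hs2).tsum_eq, ← K1_ofReal h₁₂]
    · -- lintegral bound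
      have hconst : ∀ p : ℤ × ℤ,
          (∫⁻ t in Set.Ioc (0:ℝ) 1, ‖cterm p.1 (a - t) β₁ * cterm p.2 (t + b) β₂‖₊)
            = ENNReal.ofReal (Real.exp (-((2 * Real.pi * (p.1 : ℝ)) ^ 2 * β₁))
                * Real.exp (-((2 * Real.pi * (p.2 : ℝ)) ^ 2 * β₂))) := by
        intro p
        have : (fun t : ℝ => (‖cterm p.1 (a - t) β₁ * cterm p.2 (t + b) β₂‖₊ : ENNReal))
            = fun _ : ℝ => ENNReal.ofReal (Real.exp (-((2 * Real.pi * (p.1 : ℝ)) ^ 2 * β₁))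
                * Real.exp (-((2 * Real.pi * (p.2 : ℝ)) ^ 2 * β₂))) := by
          funext t
          rw [← enorm_eq_nnnorm, ← ofReal_norm, hnorm]
        rw [this, MeasureTheory.lintegral_const, MeasureTheory.Measure.restrict_apply
          MeasurableSet.univ, Set.univ_inter, Real.volume_Ioc]
        norm_num
      simp only [enorm_eq_nnnorm]
      rw [tsum_congr hconst, ← ENNReal.ofReal_tsum_of_nonneg
        (fun _ => mul_nonneg (Real.exp_pos _).le (Real.exp_pos _).le) hsum2]
      exact ENNReal.ofReal_ne_top
  exact_mod_cast main

lemma K1_congr {θ₁ θ₂ : ℝ} (β : ℝ) (h : θ₁ = θ₂) : K1 θ₁ β = K1 θ₂ β := by rw [h]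

/-- Measure consistency condition for one plaquette subdivision in the `U(1)` gauge theory:
with the rescaling `β ↦ β/4`, integrating the heat-kernel densities of the four subdivided
plaquettes over the eight internal link variables reproduces the heat-kernel density at time
`β` on the original plaquette. -/
theorem u1_plaquette_subdivision_consistency (β : ℝ) (hβ : 0 < β) (Θ₁ Θ₂ Θ₃ Θ₄ : ℝ) :
    (∫ g₁ in (0 : ℝ)..1, ∫ g₂ in (0 : ℝ)..1, ∫ g₃ in (0 : ℝ)..1, ∫ g₄ in (0 : ℝ)..1,
      ∫ y₁ in (0 : ℝ)..1, ∫ y₂ in (0 : ℝ)..1, ∫ y₃ in (0 : ℝ)..1, ∫ y₄ in (0 : ℝ)..1,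
        K1 (-g₁ + Θ₁ + g₂ - y₂ - y₁) (β / 4) *
        K1 (y₂ - g₂ + Θ₂ - g₃ - y₃) (β / 4) *
        K1 (y₄ + y₃ + g₃ - Θ₃ - g₄) (β / 4) *
        K1 (g₁ + y₁ - y₄ + g₄ - Θ₄) (β / 4)) =
      K1 (Θ₁ + Θ₂ - Θ₃ - Θ₄) β := by
  have hq : 0 < β / 4 := by linarith
  have hq2 : 0 < β / 4 + β / 4 := by linarith
  have hq3 : 0 < β / 4 + (β / 4 + β / 4) := by linarith
  have h4 : ∀ g₁ g₂ g₃ g₄ y₁ y₂ y₃ : ℝ,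
      (∫ y₄ in (0:ℝ)..1,
        K1 (-g₁ + Θ₁ + g₂ - y₂ - y₁) (β / 4) *
        K1 (y₂ - g₂ + Θ₂ - g₃ - y₃) (β / 4) *
        K1 (y₄ + y₃ + g₃ - Θ₃ - g₄) (β / 4) *
        K1 (g₁ + y₁ - y₄ + g₄ - Θ₄) (β / 4))
      = K1 (-g₁ + Θ₁ + g₂ - y₂ - y₁) (β / 4) *
        (K1 (y₂ - g₂ + Θ₂ - g₃ - y₃) (β / 4) *
          K1 ((g₁ + y₁ + g₄ - Θ₄) + (y₃ + g₃ - Θ₃ - g₄)) (β / 4 + β / 4)) := by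
    intro g₁ g₂ g₃ g₄ y₁ y₂ y₃
    rw [intervalIntegral.integral_congr (g := fun y₄ : ℝ =>
      (K1 (-g₁ + Θ₁ + g₂ - y₂ - y₁) (β / 4) * K1 (y₂ - g₂ + Θ₂ - g₃ - y₃) (β / 4)) *
        (K1 ((g₁ + y₁ + g₄ - Θ₄) - y₄) (β / 4) *
          K1 (y₄ + (y₃ + g₃ - Θ₃ - g₄)) (β / 4)))
      (fun t _ => by
        rw [K1_congr (β / 4) (show t + y₃ + g₃ - Θ₃ - g₄ = t + (y₃ + g₃ - Θ₃ - g₄) by ring),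
          K1_congr (β / 4) (show g₁ + y₁ - t + g₄ - Θ₄ = (g₁ + y₁ + g₄ - Θ₄) - t by ring)]
        ring)]
    rw [intervalIntegral.integral_const_mul, K1_conv hq hq, mul_assoc]
  have h3 : ∀ g₁ g₂ g₃ g₄ y₁ y₂ : ℝ,
      (∫ y₃ in (0:ℝ)..1,
        K1 (-g₁ + Θ₁ + g₂ - y₂ - y₁) (β / 4) *
        (K1 (y₂ - g₂ + Θ₂ - g₃ - y₃) (β / 4) *
          K1 ((g₁ + y₁ + g₄ - Θ₄) + (y₃ + g₃ - Θ₃ - g₄)) (β / 4 + β / 4)))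
      = K1 (-g₁ + Θ₁ + g₂ - y₂ - y₁) (β / 4) *
          K1 ((y₂ - g₂ + Θ₂ - g₃) + (g₁ + y₁ - Θ₄ + g₃ - Θ₃)) (β / 4 + (β / 4 + β / 4)) := by
    intro g₁ g₂ g₃ g₄ y₁ y₂
    rw [intervalIntegral.integral_congr (g := fun y₃ : ℝ =>
      K1 (-g₁ + Θ₁ + g₂ - y₂ - y₁) (β / 4) *
        (K1 ((y₂ - g₂ + Θ₂ - g₃) - y₃) (β / 4) *
          K1 (y₃ + (g₁ + y₁ - Θ₄ + g₃ - Θ₃)) (β / 4 + β / 4)))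
      (fun t _ => by
        rw [K1_congr (β / 4) (show y₂ - g₂ + Θ₂ - g₃ - t = (y₂ - g₂ + Θ₂ - g₃) - t by ring),
          K1_congr (β / 4 + β / 4) (show (g₁ + y₁ + g₄ - Θ₄) + (t + g₃ - Θ₃ - g₄)
            = t + (g₁ + y₁ - Θ₄ + g₃ - Θ₃) by ring)])]
    rw [intervalIntegral.integral_const_mul, K1_conv hq hq2]
  have h2 : ∀ g₁ g₂ g₃ y₁ : ℝ,
      (∫ y₂ in (0:ℝ)..1,
        K1 (-g₁ + Θ₁ + g₂ - y₂ - y₁) (β / 4) *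
          K1 ((y₂ - g₂ + Θ₂ - g₃) + (g₁ + y₁ - Θ₄ + g₃ - Θ₃)) (β / 4 + (β / 4 + β / 4)))
      = K1 (Θ₁ + Θ₂ - Θ₃ - Θ₄) β := by
    intro g₁ g₂ g₃ y₁
    rw [intervalIntegral.integral_congr (g := fun y₂ : ℝ =>
      K1 ((-g₁ + Θ₁ + g₂ - y₁) - y₂) (β / 4) *
        K1 (y₂ + (-g₂ + Θ₂ + g₁ + y₁ - Θ₄ - Θ₃)) (β / 4 + (β / 4 + β / 4)))
      (fun t _ => by
        rw [K1_congr (β / 4) (show -g₁ + Θ₁ + g₂ - t - y₁ = (-g₁ + Θ₁ + g₂ - y₁) - t by ring),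
          K1_congr (β / 4 + (β / 4 + β / 4)) (show (t - g₂ + Θ₂ - g₃) + (g₁ + y₁ - Θ₄ + g₃ - Θ₃)
            = t + (-g₂ + Θ₂ + g₁ + y₁ - Θ₄ - Θ₃) by ring)])]
    rw [K1_conv hq hq3,
      K1_congr (β / 4 + (β / 4 + (β / 4 + β / 4)))
        (show (-g₁ + Θ₁ + g₂ - y₁) + (-g₂ + Θ₂ + g₁ + y₁ - Θ₄ - Θ₃) = Θ₁ + Θ₂ - Θ₃ - Θ₄ by ring),
      show β / 4 + (β / 4 + (β / 4 + β / 4)) = β by ring]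
  simp only [h4, h3, h2, intervalIntegral.integral_const, smul_eq_mul, sub_zero, one_mul]
end

section
/- As β → 0⁺, the rescaled U(1) heat kernel converges uniformly on [−1/2, 1/2] to the Gaussian density: lim_{β→0⁺} sup_{θ ∈ [−1/2, 1/2]} | √(4πβ) · K₁(θ, β) − exp(−θ²/(4β)) | = 0. (Hence at small scales the U(1) heat-kernel measure coincides with the usual Gaussian measure of the abelian gauge theory.) -/
open Real

lemma summable_gauss_int {c : ℝ} (hc : 0 < c) :
    Summable (fun n : ℤ => Real.exp (-c * (n : ℝ) ^ 2)) := by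
  have key : Summable (fun n : ℕ => Real.exp (-c * (n : ℝ) ^ 2)) := by
    refine Summable.of_nonneg_of_le (fun n => (Real.exp_pos _).le) (fun n => ?_)
      (summable_geometric_of_lt_one (Real.exp_pos _).le
        ((Real.exp_lt_one_iff (x := -c)).2 (by linarith)))
    rw [← Real.exp_nat_mul]
    apply Real.exp_le_exp.2
    have : (n : ℝ) ≤ (n : ℝ) ^ 2 := by
      rcases Nat.eq_zero_or_pos n with h | h
      · simp [h]
      · nlinarith [(Nat.one_le_cast (α := ℝ)).2 h]
    nlinarith
  apply Summable.of_nat_of_neg <;> simpa using key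

open Complex in
lemma sqrt_mul_K1 {θ β : ℝ} (hβ : 0 < β) :
    Real.sqrt (4 * π * β) * K1 θ β
      = ∑' n : ℤ, Real.exp (-((n : ℝ) - θ) ^ 2 / (4 * β)) := by
  have ha : (0 : ℝ) < 4 * π * β := by positivity
  have ha' : (0 : ℝ) < ((4 * π * β : ℝ) : ℂ).re := by simpa using ha
  have h := Complex.tsum_exp_neg_quadratic (a := ((4 * π * β : ℝ) : ℂ)) ha' (I * θ)
  have hri : ∀ x y : ℝ, ((x : ℂ) + (y : ℂ) * I).re = x ∧ ((x : ℂ) + (y : ℂ) * I).im = y := by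
    intro x y; constructor <;> simp
  have hterm : ∀ n : ℤ, (-↑π * ((4 * π * β : ℝ) : ℂ) * (n : ℂ) ^ 2 + 2 * ↑π * (I * ↑θ) * (n : ℂ))
      = ((-((2 * π * (n : ℝ)) ^ 2 * β) : ℝ) : ℂ) + ((2 * π * (n : ℝ) * θ : ℝ) : ℂ) * I := by
    intro n; push_cast; ring
  have hsum : Summable (fun n : ℤ =>
      cexp (-↑π * ((4 * π * β : ℝ) : ℂ) * (n : ℂ) ^ 2 + 2 * ↑π * (I * ↑θ) * (n : ℂ))) := by
    apply Summable.of_norm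
    have heq : ∀ n : ℤ,
        ‖cexp (-↑π * ((4 * π * β : ℝ) : ℂ) * (n : ℂ) ^ 2 + 2 * ↑π * (I * ↑θ) * (n : ℂ))‖
        = Real.exp (-(4 * π ^ 2 * β) * (n : ℝ) ^ 2) := by
      intro n
      rw [hterm n, Complex.norm_exp, (hri _ _).1]
      congr 1; ring
    rw [funext heq]
    exact summable_gauss_int (by positivity)
  have hre : (∑' n : ℤ,
      cexp (-↑π * ((4 * π * β : ℝ) : ℂ) * (n : ℂ) ^ 2 + 2 * ↑π * (I * ↑θ) * (n : ℂ))).re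
      = K1 θ β := by
    rw [Complex.re_tsum hsum, K1]
    exact tsum_congr fun n => by rw [hterm n, Complex.exp_re, (hri _ _).1, (hri _ _).2]
  have h2 : ∀ n : ℤ, (-↑π / ((4 * π * β : ℝ) : ℂ) * ((n : ℂ) + I * (I * ↑θ)) ^ 2)
      = ((-((n : ℝ) - θ) ^ 2 / (4 * β) : ℝ) : ℂ) := by
    intro n
    have hI : I * (I * (θ : ℂ)) = -↑θ := by rw [← mul_assoc, I_mul_I]; ring
    rw [hI]
    have hπ : (π : ℂ) ≠ 0 := by exact_mod_cast Real.pi_ne_zero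
    have hβc : (β : ℂ) ≠ 0 := by exact_mod_cast hβ.ne'
    push_cast
    field_simp
    ring
  have h3 : (∑' n : ℤ, cexp (-↑π / ((4 * π * β : ℝ) : ℂ) * ((n : ℂ) + I * (I * ↑θ)) ^ 2))
      = (((∑' n : ℤ, Real.exp (-((n : ℝ) - θ) ^ 2 / (4 * β))) : ℝ) : ℂ) := by
    rw [Complex.ofReal_tsum]
    exact tsum_congr fun n => by rw [h2 n, Complex.ofReal_exp]
  have hc : ((4 * π * β : ℝ) : ℂ) ^ (1 / 2 : ℂ) = ((Real.sqrt (4 * π * β) : ℝ) : ℂ) := by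
    rw [Real.sqrt_eq_rpow, Complex.ofReal_cpow ha.le]
    norm_num
  have hs : Real.sqrt (4 * π * β) ≠ 0 := by positivity
  rw [← hre, h, h3, hc]
  have : (1 / ((Real.sqrt (4 * π * β) : ℝ) : ℂ))
      * (((∑' n : ℤ, Real.exp (-((n : ℝ) - θ) ^ 2 / (4 * β))) : ℝ) : ℂ)
      = (((1 / Real.sqrt (4 * π * β)) * ∑' n : ℤ, Real.exp (-((n : ℝ) - θ) ^ 2 / (4 * β)) : ℝ) : ℂ) := by
    push_cast; ring
  rw [this, Complex.ofReal_re]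
  field_simp

lemma diff_bound {θ β : ℝ} (hβ : 0 < β) (hβ' : β ≤ 1 / 32) (hθ : |θ| ≤ 1 / 2) :
    |Real.sqrt (4 * π * β) * K1 θ β - Real.exp (-(θ ^ 2) / (4 * β))|
      ≤ Real.exp (-(1 / (32 * β))) * ∑' n : ℤ, Real.exp (-(n : ℝ) ^ 2) := by
  have hkey : ∀ n : ℤ, ((n : ℝ)) ^ 2 / 4 ≤ ((n : ℝ) - θ) ^ 2 := by
    intro n
    rcases eq_or_ne n 0 with rfl | hn
    · simpa using sq_nonneg θ
    · have h1 : (1 : ℝ) ≤ |(n : ℝ)| := by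
        rw [← Int.cast_abs]
        exact_mod_cast Int.one_le_abs hn
      have h2 : (n : ℝ) * θ ≤ |(n : ℝ)| * |θ| := (le_abs_self _).trans (abs_mul _ _).le
      nlinarith [sq_abs (n : ℝ), sq_abs θ,
        mul_nonneg (sub_nonneg.2 (show 2 * |θ| ≤ |(n : ℝ)| by linarith))
          (show (0 : ℝ) ≤ 3 * |(n : ℝ)| - 2 * |θ| by linarith), h2]
  set f : ℤ → ℝ := fun n => Real.exp (-((n : ℝ) - θ) ^ 2 / (4 * β)) with hf
  have hfs : Summable f := by
    refine Summable.of_nonneg_of_le (fun n => (Real.exp_pos _).le) (fun n => ?_)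
      (summable_gauss_int (show (0:ℝ) < 1 / (16 * β) by positivity))
    apply Real.exp_le_exp.2
    have h4 : (1 / (16 * β)) * (n : ℝ) ^ 2 = ((n : ℝ) ^ 2 / 4) / (4 * β) := by
      rw [div_div]
      ring
    have h5 : ((n : ℝ) ^ 2 / 4) / (4 * β) ≤ ((n : ℝ) - θ) ^ 2 / (4 * β) :=
      (div_le_div_iff_of_pos_right (by positivity)).2 (hkey n)
    have h6 : -(((n:ℝ) - θ) ^ 2) / (4 * β) = -((((n:ℝ) - θ) ^ 2) / (4 * β)) := neg_div _ _
    nlinarith [h5, h4]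
  have htail : ∀ n : ℤ, (if n = 0 then 0 else f n)
      ≤ Real.exp (-(1 / (32 * β))) * Real.exp (-(n : ℝ) ^ 2) := by
    intro n
    rcases eq_or_ne n 0 with rfl | hn
    · simp only [if_pos rfl]
      positivity
    · rw [if_neg hn, ← Real.exp_add]
      apply Real.exp_le_exp.2
      have hn1 : (1 : ℝ) ≤ (n : ℝ) ^ 2 := by
        have h1 : (1 : ℝ) ≤ |(n : ℝ)| := by
          rw [← Int.cast_abs]; exact_mod_cast Int.one_le_abs hn
        nlinarith [sq_abs (n : ℝ)]
      have h5 : (1 / (32 * β) + (n : ℝ) ^ 2) * (4 * β) ≤ ((n : ℝ) - θ) ^ 2 := by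
        have e : (1 / (32 * β)) * (4 * β) = 1 / 8 := by
          rw [div_mul_eq_mul_div, one_mul, div_eq_div_iff (by positivity) (by norm_num)]
          ring
        have e2 : 4 * β * (n : ℝ) ^ 2 ≤ (1 / 8) * (n : ℝ) ^ 2 := by
          apply mul_le_mul_of_nonneg_right _ (sq_nonneg _)
          linarith
        nlinarith [hkey n]
      have h7 : 1 / (32 * β) + (n : ℝ) ^ 2 ≤ ((n : ℝ) - θ) ^ 2 / (4 * β) :=
        (le_div_iff₀ (by positivity)).2 h5
      have h6 : -(((n:ℝ) - θ) ^ 2) / (4 * β) = -((((n:ℝ) - θ) ^ 2) / (4 * β)) := neg_div _ _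
      linarith
  have hsum_ite : Summable (fun n : ℤ => if n = 0 then 0 else f n) := by
    refine Summable.of_nonneg_of_le (fun n => ?_) (fun n => ?_) hfs
    · split <;> simp [f, (Real.exp_pos _).le]
    · split <;> simp [f, (Real.exp_pos _).le]
  have hT : Summable (fun n : ℤ => Real.exp (-(1 / (32 * β))) * Real.exp (-(n : ℝ) ^ 2)) := by
    refine Summable.congr (((summable_gauss_int one_pos)).mul_left
      (Real.exp (-(1 / (32 * β))))) fun n => ?_
    norm_num
  rw [sqrt_mul_K1 hβ, Summable.tsum_eq_add_tsum_ite hfs 0]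
  have hf0 : f 0 = Real.exp (-(θ ^ 2) / (4 * β)) := by
    simp only [hf, Int.cast_zero, zero_sub, neg_sq]
  rw [hf0]
  have habs : |Real.exp (-(θ ^ 2) / (4 * β)) + (∑' n : ℤ, if n = 0 then 0 else f n)
      - Real.exp (-(θ ^ 2) / (4 * β))| = ∑' n : ℤ, if n = 0 then 0 else f n := by
    rw [add_sub_cancel_left, abs_of_nonneg]
    exact tsum_nonneg fun n => by split <;> simp [f, (Real.exp_pos _).le]
  rw [habs, ← tsum_mul_left]
  exact Summable.tsum_le_tsum htail hsum_ite hT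

open Filter

/-- As `β → 0⁺`, the rescaled `U(1)` heat kernel converges uniformly on `[−1/2, 1/2]` to the
Gaussian density: `sup_{θ ∈ [−1/2,1/2]} |√(4πβ) K₁(θ, β) − exp(−θ²/(4β))| → 0`. -/
theorem u1_heat_kernel_small_scale_gaussian :
    Tendsto
      (fun β : ℝ => ⨆ θ ∈ Set.Icc (-(1 : ℝ) / 2) (1 / 2),
        |Real.sqrt (4 * Real.pi * β) * K1 θ β - Real.exp (-(θ ^ 2) / (4 * β))|)
      (nhdsWithin 0 (Set.Ioi 0)) (nhds 0) := by
  have hC0 : 0 ≤ ∑' n : ℤ, Real.exp (-(n : ℝ) ^ 2) :=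
    tsum_nonneg fun n => (Real.exp_pos _).le
  apply squeeze_zero'
    (g := fun β : ℝ => Real.exp (-(1 / (32 * β))) * ∑' n : ℤ, Real.exp (-(n : ℝ) ^ 2))
  · filter_upwards with β
    exact Real.iSup_nonneg fun θ => Real.iSup_nonneg fun _ => abs_nonneg _
  · filter_upwards [Ioo_mem_nhdsGT_of_mem
      (by norm_num : (0:ℝ) ∈ Set.Ico (0:ℝ) (1/32))] with β hβ
    have hb : 0 ≤ Real.exp (-(1 / (32 * β))) * ∑' n : ℤ, Real.exp (-(n : ℝ) ^ 2) :=
      mul_nonneg (Real.exp_pos _).le hC0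
    refine Real.iSup_le (fun θ => Real.iSup_le (fun hθ => ?_) hb) hb
    refine diff_bound hβ.1 hβ.2.le ?_
    rw [abs_le]
    exact ⟨by linarith [hθ.1], hθ.2⟩
  · have h1 : Tendsto (fun β : ℝ => -(1 / (32 * β))) (nhdsWithin 0 (Set.Ioi 0)) atBot := by
      apply tendsto_neg_atTop_atBot.comp
      have e : (fun β : ℝ => 1 / (32 * β)) = fun β : ℝ => (1 / 32) * β⁻¹ := by
        funext β; rw [one_div, mul_inv]; norm_num [mul_comm]
      rw [e]
      exact tendsto_inv_nhdsGT_zero.const_mul_atTop (by norm_num)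
    have h2 := (Real.tendsto_exp_atBot.comp h1).mul_const
      (∑' n : ℤ, Real.exp (-(n : ℝ) ^ 2))
    simpa using h2
end

section
/- Let G be a compact topological group with normalized Haar probability measure μ_H, and let p′, p″, p : G → ℝ be continuous central functions for which there exist constants c₁, c₂ > 0 such that ∫_G p′(aX) p′(X⁻¹b) dμ_H(X) = c₁ · p″(ab) and ∫_G p″(aX) p″(X⁻¹b) dμ_H(X) = c₂ · p(ab) for all a, b ∈ G. Then for all G₁, G₂, G₃, G₄ ∈ G, ∫_{G⁴} p′(X₁⁻¹ G₁ X₂) · p′(X₂⁻¹ G₂ X₃) · p′(X₃⁻¹ G₃⁻¹ X₄) · p′(X₄⁻¹ G₄⁻¹ X₁) dμ_H(X₁) dμ_H(X₂) dμ_H(X₃) dμ_H(X₄) = c₁² c₂ · p(G₁ G₂ G₃⁻¹ G₄⁻¹). (Hence, if such a sequence of central functions exists for plaquette subdivisions of all sizes, an interaction measure exists on the projective limit; the proportionality constants are absorbed in the normalization.) -/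
open MeasureTheory

/-- If the continuous central functions `p′, p″, p` on a compact group `G` satisfy the
convolution proportionality relations (condition (5.6) of the paper)
`∫ p′(aX) p′(X⁻¹b) dμ(X) = c₁ p″(ab)` and `∫ p″(aX) p″(X⁻¹b) dμ(X) = c₂ p(ab)`,
then the four-variable plaquette-subdivision integral of `p′` equals
`c₁² c₂ · p(G₁G₂G₃⁻¹G₄⁻¹)`; hence an interaction measure exists on the projective limit. -/
theorem plaquette_subdivision_convolution_identity
    {G : Type*} [Group G] [TopologicalSpace G] [IsTopologicalGroup G] [CompactSpace G]
    [MeasurableSpace G] [BorelSpace G]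
    (μ : Measure G) [μ.IsHaarMeasure] [IsProbabilityMeasure μ]
    (p' p'' p : G → ℝ)
    (hp'cont : Continuous p') (hp''cont : Continuous p'') (hpcont : Continuous p)
    (hp'central : ∀ x y : G, p' (x * y) = p' (y * x))
    (hp''central : ∀ x y : G, p'' (x * y) = p'' (y * x))
    (hpcentral : ∀ x y : G, p (x * y) = p (y * x))
    (c₁ c₂ : ℝ) (hc₁ : 0 < c₁) (hc₂ : 0 < c₂)
    (h₁ : ∀ a b : G, ∫ X, p' (a * X) * p' (X⁻¹ * b) ∂μ = c₁ * p'' (a * b))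
    (h₂ : ∀ a b : G, ∫ X, p'' (a * X) * p'' (X⁻¹ * b) ∂μ = c₂ * p (a * b))
    (G₁ G₂ G₃ G₄ : G) :
    (∫ X₁, ∫ X₂, ∫ X₃, ∫ X₄,
        p' (X₁⁻¹ * G₁ * X₂) * p' (X₂⁻¹ * G₂ * X₃) * p' (X₃⁻¹ * G₃⁻¹ * X₄) *
          p' (X₄⁻¹ * G₄⁻¹ * X₁) ∂μ ∂μ ∂μ ∂μ) =
      c₁ ^ 2 * c₂ * p (G₁ * G₂ * G₃⁻¹ * G₄⁻¹) := by
  -- Step 1: compute the innermost integral (over X₄)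
  have e4 : ∀ X₁ X₂ X₃ : G,
      (∫ X₄, p' (X₁⁻¹ * G₁ * X₂) * p' (X₂⁻¹ * G₂ * X₃) * p' (X₃⁻¹ * G₃⁻¹ * X₄) *
          p' (X₄⁻¹ * G₄⁻¹ * X₁) ∂μ)
      = c₁ * (p' (X₁⁻¹ * G₁ * X₂) * p' (X₂⁻¹ * G₂ * X₃) *
          p'' (X₃⁻¹ * G₃⁻¹ * (G₄⁻¹ * X₁))) := by
    intro X₁ X₂ X₃
    have eq1 : ∀ X₄ : G,
        p' (X₁⁻¹ * G₁ * X₂) * p' (X₂⁻¹ * G₂ * X₃) * p' (X₃⁻¹ * G₃⁻¹ * X₄) *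
          p' (X₄⁻¹ * G₄⁻¹ * X₁)
        = (p' (X₁⁻¹ * G₁ * X₂) * p' (X₂⁻¹ * G₂ * X₃)) *
          (p' ((X₃⁻¹ * G₃⁻¹) * X₄) * p' (X₄⁻¹ * (G₄⁻¹ * X₁))) := by
      intro X₄
      rw [mul_assoc X₄⁻¹ G₄⁻¹ X₁]
      ring
    simp_rw [eq1]
    rw [integral_const_mul, h₁]
    ring
  simp_rw [e4, integral_const_mul]
  -- Step 2: swap the X₂ and X₃ integrals (Fubini)
  have swap : ∀ X₁ : G,
      (∫ X₂, ∫ X₃, p' (X₁⁻¹ * G₁ * X₂) * p' (X₂⁻¹ * G₂ * X₃) *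
          p'' (X₃⁻¹ * G₃⁻¹ * (G₄⁻¹ * X₁)) ∂μ ∂μ)
      = ∫ X₃, ∫ X₂, p' (X₁⁻¹ * G₁ * X₂) * p' (X₂⁻¹ * G₂ * X₃) *
          p'' (X₃⁻¹ * G₃⁻¹ * (G₄⁻¹ * X₁)) ∂μ ∂μ := by
    intro X₁
    apply integral_integral_swap_of_hasCompactSupport
    · apply Continuous.mul
      · apply Continuous.mul
        · exact hp'cont.comp (by fun_prop)
        · exact hp'cont.comp (by fun_prop)
      · exact hp''cont.comp (by fun_prop)
    · exact HasCompactSupport.of_compactSpace _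
  simp_rw [swap]
  -- Step 3: compute the X₂ integral
  have e2 : ∀ X₁ X₃ : G,
      (∫ X₂, p' (X₁⁻¹ * G₁ * X₂) * p' (X₂⁻¹ * G₂ * X₃) *
          p'' (X₃⁻¹ * G₃⁻¹ * (G₄⁻¹ * X₁)) ∂μ)
      = c₁ * (p'' (X₁⁻¹ * G₁ * (G₂ * X₃)) * p'' (X₃⁻¹ * G₃⁻¹ * (G₄⁻¹ * X₁))) := by
    intro X₁ X₃
    have eq1 : ∀ X₂ : G,
        p' (X₁⁻¹ * G₁ * X₂) * p' (X₂⁻¹ * G₂ * X₃) *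
          p'' (X₃⁻¹ * G₃⁻¹ * (G₄⁻¹ * X₁))
        = p'' (X₃⁻¹ * G₃⁻¹ * (G₄⁻¹ * X₁)) *
          (p' ((X₁⁻¹ * G₁) * X₂) * p' (X₂⁻¹ * (G₂ * X₃))) := by
      intro X₂
      rw [mul_assoc X₂⁻¹ G₂ X₃]
      ring
    simp_rw [eq1]
    rw [integral_const_mul, h₁]
    ring
  simp_rw [e2, integral_const_mul]
  -- Step 4: compute the X₃ integral
  have e3 : ∀ X₁ : G,
      (∫ X₃, p'' (X₁⁻¹ * G₁ * (G₂ * X₃)) * p'' (X₃⁻¹ * G₃⁻¹ * (G₄⁻¹ * X₁)) ∂μ)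
      = c₂ * p (G₁ * G₂ * G₃⁻¹ * G₄⁻¹) := by
    intro X₁
    have eq1 : ∀ X₃ : G,
        p'' (X₁⁻¹ * G₁ * (G₂ * X₃)) * p'' (X₃⁻¹ * G₃⁻¹ * (G₄⁻¹ * X₁))
        = p'' ((X₁⁻¹ * G₁ * G₂) * X₃) * p'' (X₃⁻¹ * (G₃⁻¹ * (G₄⁻¹ * X₁))) := by
      intro X₃
      rw [mul_assoc X₃⁻¹, mul_assoc (X₁⁻¹ * G₁) G₂ X₃]
    simp_rw [eq1]
    rw [h₂]
    congr 1
    rw [show X₁⁻¹ * G₁ * G₂ * (G₃⁻¹ * (G₄⁻¹ * X₁)) =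
      X₁⁻¹ * (G₁ * G₂ * G₃⁻¹ * G₄⁻¹ * X₁) by group,
      hpcentral, show G₁ * G₂ * G₃⁻¹ * G₄⁻¹ * X₁ * X₁⁻¹ = G₁ * G₂ * G₃⁻¹ * G₄⁻¹ by group]
  simp_rw [e3, integral_const]
  simp [measure_univ]
  ring
end

section
/- Let G be a compact topological group with normalized Haar probability measure μ_H, let Λ be a countable index set, let (χ_λ)_{λ∈Λ} be continuous class functions χ_λ : G → ℂ (i.e. χ_λ(xy) = χ_λ(yx) for all x, y), let (d_λ)_{λ∈Λ} be positive reals with |χ_λ(g)| ≤ d_λ for all g ∈ G, satisfying the Schur orthogonality relations ∫_G χ_λ(g₁ x) χ_μ(x⁻¹ g₂) dμ_H(x) = δ_{λμ} · d_λ⁻¹ · χ_λ(g₁ g₂) for all λ, μ ∈ Λ and g₁, g₂ ∈ G, and let (c_λ)_{λ∈Λ} be reals with Σ_{λ∈Λ} d_λ² e^{−c_λ s} < ∞ for every s > 0. Define the heat-kernel density K(g, s) := Σ_{λ∈Λ} d_λ e^{−c_λ s} χ_λ(g). Then for all s, t > 0 and all g₁, g₂ ∈ G, ∫_G K(g₁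 x, s) · K(x⁻¹ g₂, t) dμ_H(x) = K(g₁ g₂, s + t). -/
open MeasureTheory

/-- The abstract heat-kernel density `K(g, s) = Σ_{λ∈Λ} d_λ e^{−c_λ s} χ_λ(g)` built from
characters `χ_λ`, dimensions `d_λ` and Laplacian eigenvalues `c_λ` of a compact group. -/
noncomputable def heatKernel {Λ G : Type*} (d c : Λ → ℝ) (χ : Λ → G → ℂ)
    (g : G) (s : ℝ) : ℂ :=
  ∑' l : Λ, (d l : ℂ) * (Real.exp (-(c l) * s) : ℂ) * χ l g

/-- Summing a family supported on the diagonal of `Λ × Λ`. -/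
lemma tsum_diag_aux {Λ : Type*} [DecidableEq Λ] (ψ : Λ → ℂ) :
    (∑' p : Λ × Λ, if p.1 = p.2 then ψ p.1 else 0) = ∑' l, ψ l := by
  apply tsum_eq_tsum_of_ne_zero_bij (fun l => ((l : Λ), (l : Λ)))
  · intro x y hxy
    exact Subtype.ext (congrArg Prod.fst hxy)
  · rintro ⟨l, m⟩ hp
    by_cases h : l = m
    · subst h
      refine ⟨⟨l, ?_⟩, rfl⟩
      simpa using hp
    · exfalso
      apply hp
      simp [h]
  · intro x
    simp

/-- Convolution semigroup property of the heat-kernel density of a compact group: given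
continuous class functions `χ_λ` bounded by `d_λ > 0` and satisfying Schur orthogonality,
and eigenvalues `c_λ` making `Σ d_λ² e^{−c_λ s}` summable for all `s > 0`,
`∫ K(g₁x, s) K(x⁻¹g₂, t) dμ(x) = K(g₁g₂, s + t)`. -/
theorem heat_kernel_convolution_semigroup
    {G : Type*} [Group G] [TopologicalSpace G] [IsTopologicalGroup G] [CompactSpace G]
    [MeasurableSpace G] [BorelSpace G]
    (μ : Measure G) [μ.IsHaarMeasure] [IsProbabilityMeasure μ]
    {Λ : Type*} [Countable Λ] [DecidableEq Λ]
    (χ : Λ → G → ℂ) (d c : Λ → ℝ)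
    (hχcont : ∀ l, Continuous (χ l))
    (hχclass : ∀ l (x y : G), χ l (x * y) = χ l (y * x))
    (hd : ∀ l, 0 < d l)
    (hbound : ∀ l (g : G), ‖χ l g‖ ≤ d l)
    (hschur : ∀ l m (g₁ g₂ : G),
      ∫ x, χ l (g₁ * x) * χ m (x⁻¹ * g₂) ∂μ =
        (if l = m then 1 else 0) * ((d l : ℂ))⁻¹ * χ l (g₁ * g₂))
    (hsum : ∀ s : ℝ, 0 < s → Summable fun l => (d l) ^ 2 * Real.exp (-(c l) * s))
    (s t : ℝ) (hs : 0 < s) (ht : 0 < t) (g₁ g₂ : G) :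
    ∫ x, heatKernel d c χ (g₁ * x) s * heatKernel d c χ (x⁻¹ * g₂) t ∂μ =
      heatKernel d c χ (g₁ * g₂) (s + t) := by
  classical
  -- the double-indexed family of terms
  set F : Λ × Λ → G → ℂ := fun p x =>
    ((d p.1 : ℂ) * (Real.exp (-(c p.1) * s) : ℂ) * χ p.1 (g₁ * x)) *
    ((d p.2 : ℂ) * (Real.exp (-(c p.2) * t) : ℂ) * χ p.2 (x⁻¹ * g₂)) with hFdef
  set B : Λ × Λ → ℝ := fun p =>
    (d p.1 ^ 2 * Real.exp (-(c p.1) * s)) * (d p.2 ^ 2 * Real.exp (-(c p.2) * t)) with hBdef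
  have hnorm : ∀ (l : Λ) (u : ℝ) (g : G),
      ‖(d l : ℂ) * (Real.exp (-(c l) * u) : ℂ) * χ l g‖ ≤ d l ^ 2 * Real.exp (-(c l) * u) := by
    intro l u g
    have h1 : ‖((d l : ℝ) : ℂ)‖ = d l := by
      rw [Complex.norm_real, Real.norm_of_nonneg (hd l).le]
    have h2 : ‖((Real.exp (-(c l) * u) : ℝ) : ℂ)‖ = Real.exp (-(c l) * u) := by
      rw [Complex.norm_real, Real.norm_of_nonneg (Real.exp_pos _).le]
    have h3 : ‖χ l g‖ ≤ d l := hbound l g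
    calc ‖((d l : ℝ) : ℂ) * (Real.exp (-(c l) * u) : ℂ) * χ l g‖
        = d l * Real.exp (-(c l) * u) * ‖χ l g‖ := by rw [norm_mul, norm_mul, h1, h2]
      _ ≤ d l * Real.exp (-(c l) * u) * d l := by
          have : (0:ℝ) ≤ d l * Real.exp (-(c l) * u) :=
            mul_nonneg (hd l).le (Real.exp_pos _).le
          exact mul_le_mul_of_nonneg_left h3 this
      _ = d l ^ 2 * Real.exp (-(c l) * u) := by ring
  have hsummable_norm : ∀ (u : ℝ), 0 < u → ∀ g : G,
      Summable fun l => ‖(d l : ℂ) * (Real.exp (-(c l) * u) : ℂ) * χ l g‖ := fun u hu g =>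
    Summable.of_nonneg_of_le (fun l => norm_nonneg _) (fun l => hnorm l u g) (hsum u hu)
  -- pointwise product expansion
  have hpt : ∀ x : G, heatKernel d c χ (g₁ * x) s * heatKernel d c χ (x⁻¹ * g₂) t
      = ∑' p : Λ × Λ, F p x := fun x =>
    tsum_mul_tsum_of_summable_norm (hsummable_norm s hs _) (hsummable_norm t ht _)
  -- measurability
  have hmeas : ∀ p : Λ × Λ, AEStronglyMeasurable (F p) μ := by
    intro p
    apply Continuous.aestronglyMeasurable
    have h1 : Continuous fun x : G => χ p.1 (g₁ * x) :=
      (hχcont p.1).comp (continuous_const.mul continuous_id)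
    have h2 : Continuous fun x : G => χ p.2 (x⁻¹ * g₂) :=
      (hχcont p.2).comp (continuous_inv.mul continuous_const)
    exact (continuous_const.mul h1).mul (continuous_const.mul h2)
  -- norm bound for the family
  have hbF : ∀ (p : Λ × Λ) (x : G), ‖F p x‖ ≤ B p := by
    intro p x
    rw [hFdef]
    calc ‖_ * _‖ = ‖_‖ * ‖_‖ := norm_mul _ _
      _ ≤ B p := mul_le_mul (hnorm p.1 s (g₁ * x)) (hnorm p.2 t (x⁻¹ * g₂))
          (norm_nonneg _) (by positivity)
  have hBnonneg : ∀ p, 0 ≤ B p := by intro p; rw [hBdef]; positivity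
  have hBsum : Summable B :=
    (hsum s hs).mul_of_nonneg (hsum t ht) (fun l => by positivity) (fun l => by positivity)
  -- finiteness of the lintegrals
  have hlint : (∑' p : Λ × Λ, ∫⁻ x, ‖F p x‖₊ ∂μ) ≠ ⊤ := by
    have h1 : ∀ p : Λ × Λ, ∫⁻ x, ‖F p x‖₊ ∂μ ≤ ENNReal.ofReal (B p) := by
      intro p
      calc ∫⁻ x, (‖F p x‖₊ : ENNReal) ∂μ ≤ ∫⁻ _, ENNReal.ofReal (B p) ∂μ := by
            apply lintegral_mono
            intro x
            show (‖F p x‖₊ : ENNReal) ≤ ENNReal.ofReal (B p)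
            rw [← enorm_eq_nnnorm, ← ofReal_norm]
            exact ENNReal.ofReal_le_ofReal (hbF p x)
        _ = ENNReal.ofReal (B p) := by simp
    refine ne_top_of_le_ne_top ?_ (ENNReal.tsum_le_tsum h1)
    rw [← ENNReal.ofReal_tsum_of_nonneg hBnonneg hBsum]
    exact ENNReal.ofReal_ne_top
  -- compute each integral via Schur orthogonality
  have hint : ∀ p : Λ × Λ, ∫ x, F p x ∂μ =
      (if p.1 = p.2 then 1 else 0) * ((d p.1 : ℂ))⁻¹ * χ p.1 (g₁ * g₂) *
        ((d p.1 : ℂ) * (Real.exp (-(c p.1) * s) : ℂ) *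
         ((d p.2 : ℂ) * (Real.exp (-(c p.2) * t) : ℂ))) := by
    intro p
    have heq : ∀ x : G, F p x =
        ((d p.1 : ℂ) * (Real.exp (-(c p.1) * s) : ℂ) *
         ((d p.2 : ℂ) * (Real.exp (-(c p.2) * t) : ℂ))) *
        (χ p.1 (g₁ * x) * χ p.2 (x⁻¹ * g₂)) := by
      intro x; rw [hFdef]; ring
    rw [integral_congr_ae (Filter.Eventually.of_forall heq), integral_const_mul,
      hschur p.1 p.2 g₁ g₂]
    ring
  -- the key diagonal identity
  have hkey : ∀ l : Λ,
      (1 : ℂ) * ((d l : ℂ))⁻¹ * χ l (g₁ * g₂) *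
        ((d l : ℂ) * (Real.exp (-(c l) * s) : ℂ) *
         ((d l : ℂ) * (Real.exp (-(c l) * t) : ℂ))) =
      (d l : ℂ) * (Real.exp (-(c l) * (s + t)) : ℂ) * χ l (g₁ * g₂) := by
    intro l
    have hdne : (d l : ℂ) ≠ 0 := by
      exact_mod_cast (hd l).ne'
    have hexpadd : ((Real.exp (-(c l) * s) : ℝ) : ℂ) * ((Real.exp (-(c l) * t) : ℝ) : ℂ)
        = ((Real.exp (-(c l) * (s + t)) : ℝ) : ℂ) := by
      rw [← Complex.ofReal_mul, ← Real.exp_add]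
      norm_num
      ring_nf
    calc (1 : ℂ) * ((d l : ℂ))⁻¹ * χ l (g₁ * g₂) *
          ((d l : ℂ) * (Real.exp (-(c l) * s) : ℂ) *
           ((d l : ℂ) * (Real.exp (-(c l) * t) : ℂ)))
        = (((d l : ℂ))⁻¹ * (d l : ℂ)) *
            ((d l : ℂ) * ((Real.exp (-(c l) * s) : ℂ) * (Real.exp (-(c l) * t) : ℂ)) *
              χ l (g₁ * g₂)) := by ring
      _ = (d l : ℂ) * (Real.exp (-(c l) * (s + t)) : ℂ) * χ l (g₁ * g₂) := by
          rw [inv_mul_cancel₀ hdne, one_mul, hexpadd]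
  -- rewrite the summand as a diagonal family
  have hswitch : ∀ p : Λ × Λ,
      (if p.1 = p.2 then (1:ℂ) else 0) * ((d p.1 : ℂ))⁻¹ * χ p.1 (g₁ * g₂) *
        ((d p.1 : ℂ) * (Real.exp (-(c p.1) * s) : ℂ) *
         ((d p.2 : ℂ) * (Real.exp (-(c p.2) * t) : ℂ))) =
      if p.1 = p.2 then (d p.1 : ℂ) * (Real.exp (-(c p.1) * (s + t)) : ℂ) * χ p.1 (g₁ * g₂)
        else 0 := by
    rintro ⟨l, m⟩
    by_cases h : l = m
    · subst h
      simp only [if_pos rfl]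
      exact hkey l
    · simp [h]
  -- put everything together
  calc ∫ x, heatKernel d c χ (g₁ * x) s * heatKernel d c χ (x⁻¹ * g₂) t ∂μ
      = ∫ x, ∑' p : Λ × Λ, F p x ∂μ := integral_congr_ae (Filter.Eventually.of_forall hpt)
    _ = ∑' p : Λ × Λ, ∫ x, F p x ∂μ := integral_tsum hmeas hlint
    _ = ∑' p : Λ × Λ, if p.1 = p.2 then
          (d p.1 : ℂ) * (Real.exp (-(c p.1) * (s + t)) : ℂ) * χ p.1 (g₁ * g₂) else 0 := by
        refine tsum_congr fun p => ?_
        rw [hint p, hswitch p]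
    _ = ∑' l : Λ, (d l : ℂ) * (Real.exp (-(c l) * (s + t)) : ℂ) * χ l (g₁ * g₂) :=
        tsum_diag_aux (fun l => (d l : ℂ) * (Real.exp (-(c l) * (s + t)) : ℂ) * χ l (g₁ * g₂))
    _ = heatKernel d c χ (g₁ * g₂) (s + t) := rfl
end

section
/- Let G be a compact topological group with normalized Haar probability measure μ_H, let Λ be a countable index set, let (χ_λ)_{λ∈Λ} be continuous class functions χ_λ : G → ℂ (i.e. χ_λ(xy) = χ_λ(yx) for all x, y), let (d_λ)_{λ∈Λ} be positive reals with |χ_λ(g)| ≤ d_λ for all g ∈ G, satisfying the Schur orthogonality relations ∫_G χ_λ(g₁ x) χ_μ(x⁻¹ g₂) dμ_H(x) = δ_{λμ} · d_λ⁻¹ · χ_λ(g₁ g₂) for all λ, μ ∈ Λ and g₁, g₂ ∈ G, and let (c_λ)_{λ∈Λ} be reals with Σ_{λ∈Λ} d_λ² e^{−c_λ s} < ∞ for every s > 0. Define K(g, s) := Σ_{λ∈Λ} d_λ e^{−c_λ s} χ_λ(g). Then for every β > 0 and all G₁, G₂, G₃, G₄ ∈ G, the subdivision consistency condition holds with the rescaling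 β ↦ β/4: ∫_{G⁴} K(X₁⁻¹ G₁ X₂, β/4) · K(X₂⁻¹ G₂ X₃, β/4) · K(X₃⁻¹ G₃⁻¹ X₄, β/4) · K(X₄⁻¹ G₄⁻¹ X₁, β/4) dμ_H(X₁) dμ_H(X₂) dμ_H(X₃) dμ_H(X₄) = K(G₁ G₂ G₃⁻¹ G₄⁻¹, β). (Hence, using the heat kernel as plaquette density with β_k = c/4^k at lattice refinement level k, a consistent interaction measure exists on the projective limit of the gauge theory with compact structure group G.) -/
open MeasureTheory

section Aux

variable {G : Type*} [Group G] [TopologicalSpace G] [IsTopologicalGroup G] [CompactSpace G]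
    [MeasurableSpace G] [BorelSpace G]
    (μ : Measure G) [IsProbabilityMeasure μ]
    {Λ : Type*} [Countable Λ] [DecidableEq Λ]
    (χ : Λ → G → ℂ) (d c : Λ → ℝ)

/-- Norm bound on the terms of the heat kernel sum. -/
lemma heatKernel_term_norm_le (hd : ∀ l, 0 < d l)
    (hbound : ∀ l (g : G), ‖χ l g‖ ≤ d l) (s : ℝ) (l : Λ) (g : G) :
    ‖(d l : ℂ) * (Real.exp (-(c l) * s) : ℂ) * χ l g‖ ≤ d l ^ 2 * Real.exp (-(c l) * s) := by
  have h1 : ‖(d l : ℂ)‖ = d l := by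
    rw [Complex.norm_real, Real.norm_of_nonneg (hd l).le]
  have h2 : ‖(Real.exp (-(c l) * s) : ℂ)‖ = Real.exp (-(c l) * s) := by
    rw [Complex.norm_real, Real.norm_of_nonneg (Real.exp_nonneg _)]
  calc ‖(d l : ℂ) * (Real.exp (-(c l) * s) : ℂ) * χ l g‖
      = d l * Real.exp (-(c l) * s) * ‖χ l g‖ := by
        rw [norm_mul, norm_mul, h1, h2]
    _ ≤ d l * Real.exp (-(c l) * s) * d l := by
        exact mul_le_mul_of_nonneg_left (hbound l g)
          (mul_nonneg (hd l).le (Real.exp_nonneg _))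
    _ = d l ^ 2 * Real.exp (-(c l) * s) := by ring

lemma heatKernel_summable_norm (hd : ∀ l, 0 < d l)
    (hbound : ∀ l (g : G), ‖χ l g‖ ≤ d l)
    (hsum : ∀ s : ℝ, 0 < s → Summable fun l => (d l) ^ 2 * Real.exp (-(c l) * s))
    {s : ℝ} (hs : 0 < s) (g : G) :
    Summable fun l => ‖(d l : ℂ) * (Real.exp (-(c l) * s) : ℂ) * χ l g‖ :=
  Summable.of_nonneg_of_le (fun _ => norm_nonneg _)
    (fun l => heatKernel_term_norm_le χ d c hd hbound s l g) (hsum s hs)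

/-- Convolution / semigroup property of the abstract heat kernel. -/
lemma heatKernel_conv
    (hχcont : ∀ l, Continuous (χ l))
    (hd : ∀ l, 0 < d l)
    (hbound : ∀ l (g : G), ‖χ l g‖ ≤ d l)
    (hschur : ∀ l m (g₁ g₂ : G),
      ∫ x, χ l (g₁ * x) * χ m (x⁻¹ * g₂) ∂μ =
        (if l = m then 1 else 0) * ((d l : ℂ))⁻¹ * χ l (g₁ * g₂))
    (hsum : ∀ s : ℝ, 0 < s → Summable fun l => (d l) ^ 2 * Real.exp (-(c l) * s))
    {s t : ℝ} (hs : 0 < s) (ht : 0 < t) (a b : G) :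
    ∫ x, heatKernel d c χ (a * x) s * heatKernel d c χ (x⁻¹ * b) t ∂μ =
      heatKernel d c χ (a * b) (s + t) := by
  set F : Λ → G → ℂ := fun l x => (d l : ℂ) * (Real.exp (-(c l) * s) : ℂ) * χ l (a * x)
    with hF
  set Gm : Λ → G → ℂ := fun m x => (d m : ℂ) * (Real.exp (-(c m) * t) : ℂ) * χ m (x⁻¹ * b)
    with hGm
  have hFnorm : ∀ l x, ‖F l x‖ ≤ d l ^ 2 * Real.exp (-(c l) * s) := fun l x =>
    heatKernel_term_norm_le χ d c hd hbound s l (a * x)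
  have hGnorm : ∀ m x, ‖Gm m x‖ ≤ d m ^ 2 * Real.exp (-(c m) * t) := fun m x =>
    heatKernel_term_norm_le χ d c hd hbound t m (x⁻¹ * b)
  have hFsummable : ∀ x, Summable fun l => ‖F l x‖ := fun x =>
    heatKernel_summable_norm χ d c hd hbound hsum hs (a * x)
  have hGsummable : ∀ x, Summable fun m => ‖Gm m x‖ := fun x =>
    heatKernel_summable_norm χ d c hd hbound hsum ht (x⁻¹ * b)
  -- pointwise: product of the two kernels is a sum over pairs
  have hpt : ∀ x, heatKernel d c χ (a * x) s * heatKernel d c χ (x⁻¹ * b) t =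
      ∑' p : Λ × Λ, F p.1 x * Gm p.2 x := by
    intro x
    exact tsum_mul_tsum_of_summable_norm (hFsummable x) (hGsummable x)
  -- integrability of each product term
  have hcont : ∀ p : Λ × Λ, Continuous fun x => F p.1 x * Gm p.2 x := by
    intro p
    apply Continuous.mul
    · exact continuous_const.mul ((hχcont p.1).comp (continuous_const.mul continuous_id))
    · exact continuous_const.mul
        ((hχcont p.2).comp ((continuous_inv).mul continuous_const))
  have hint : ∀ p : Λ × Λ, Integrable (fun x => F p.1 x * Gm p.2 x) μ := fun p =>
    (hcont p).integrable_of_hasCompactSupport (HasCompactSupport.of_compactSpace _)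
  -- summability of integrals of norms
  have hprodsum : Summable fun p : Λ × Λ =>
      (d p.1 ^ 2 * Real.exp (-(c p.1) * s)) * (d p.2 ^ 2 * Real.exp (-(c p.2) * t)) :=
    (hsum s hs).mul_of_nonneg (hsum t ht) (fun l => by positivity) (fun m => by positivity)
  have hbnd : ∀ p : Λ × Λ, (∫ x, ‖F p.1 x * Gm p.2 x‖ ∂μ) ≤
      (d p.1 ^ 2 * Real.exp (-(c p.1) * s)) * (d p.2 ^ 2 * Real.exp (-(c p.2) * t)) := by
    intro p
    calc (∫ x, ‖F p.1 x * Gm p.2 x‖ ∂μ)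
        ≤ ∫ _x, (d p.1 ^ 2 * Real.exp (-(c p.1) * s)) *
            (d p.2 ^ 2 * Real.exp (-(c p.2) * t)) ∂μ := by
          apply integral_mono (hint p).norm (integrable_const _)
          intro x
          simp only [norm_mul]
          exact mul_le_mul (hFnorm p.1 x) (hGnorm p.2 x) (norm_nonneg _) (by positivity)
      _ = (d p.1 ^ 2 * Real.exp (-(c p.1) * s)) * (d p.2 ^ 2 * Real.exp (-(c p.2) * t)) := by
          simp
  have hintnormsum : Summable fun p : Λ × Λ => ∫ x, ‖F p.1 x * Gm p.2 x‖ ∂μ :=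
    Summable.of_nonneg_of_le
      (fun p => integral_nonneg fun x => norm_nonneg _) hbnd hprodsum
  -- swap integral and sum
  have hswap : ∫ x, (∑' p : Λ × Λ, F p.1 x * Gm p.2 x) ∂μ =
      ∑' p : Λ × Λ, ∫ x, F p.1 x * Gm p.2 x ∂μ :=
    (integral_tsum_of_summable_integral_norm hint hintnormsum).symm
  -- compute each integral via Schur orthogonality
  have hterm : ∀ p : Λ × Λ, (∫ x, F p.1 x * Gm p.2 x ∂μ) =
      (d p.1 : ℂ) * (Real.exp (-(c p.1) * s) : ℂ) * ((d p.2 : ℂ) *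
        (Real.exp (-(c p.2) * t) : ℂ)) *
        ((if p.1 = p.2 then 1 else 0) * ((d p.1 : ℂ))⁻¹ * χ p.1 (a * b)) := by
    intro p
    have : ∀ x, F p.1 x * Gm p.2 x =
        (d p.1 : ℂ) * (Real.exp (-(c p.1) * s) : ℂ) * ((d p.2 : ℂ) *
          (Real.exp (-(c p.2) * t) : ℂ)) * (χ p.1 (a * x) * χ p.2 (x⁻¹ * b)) := by
      intro x; simp only [hF, hGm]; ring
    simp only [this]
    rw [MeasureTheory.integral_const_mul, hschur p.1 p.2 a b]
  -- summability of the integrals themselves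
  have hCsummable : Summable fun p : Λ × Λ => ∫ x, F p.1 x * Gm p.2 x ∂μ :=
    Summable.of_norm_bounded hintnormsum fun p => norm_integral_le_integral_norm _
  calc ∫ x, heatKernel d c χ (a * x) s * heatKernel d c χ (x⁻¹ * b) t ∂μ
      = ∫ x, (∑' p : Λ × Λ, F p.1 x * Gm p.2 x) ∂μ := by
        exact integral_congr_ae (Filter.Eventually.of_forall hpt)
    _ = ∑' p : Λ × Λ, ∫ x, F p.1 x * Gm p.2 x ∂μ := hswap
    _ = ∑' l : Λ, ∑' m : Λ, ∫ x, F l x * Gm m x ∂μ := Summable.tsum_prod' hCsummable hCsummable.prod_factor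
    _ = heatKernel d c χ (a * b) (s + t) := by
        unfold heatKernel
        apply tsum_congr
        intro l
        have hinner : (∑' m : Λ, ∫ x, F l x * Gm m x ∂μ) = ∫ x, F l x * Gm l x ∂μ := by
          apply tsum_eq_single
          intro m hm
          rw [hterm (l, m)]
          simp [if_neg (Ne.symm hm)]
        have hdl : (d l : ℂ) ≠ 0 := by
          exact_mod_cast (hd l).ne'
        have hexp : (Real.exp (-(c l) * (s + t)) : ℂ) =
            (Real.exp (-(c l) * s) : ℂ) * (Real.exp (-(c l) * t) : ℂ) := by
          rw [← Complex.ofReal_mul, ← Real.exp_add]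
          ring_nf
        rw [hinner, hterm (l, l), if_pos rfl, one_mul, hexp]
        field_simp

/-- The heat kernel is a class function: conjugation invariance. -/
lemma heatKernel_conj (hχclass : ∀ l (x y : G), χ l (x * y) = χ l (y * x))
    (x h : G) (s : ℝ) :
    heatKernel d c χ (x⁻¹ * (h * x)) s = heatKernel d c χ h s := by
  unfold heatKernel
  apply tsum_congr
  intro l
  rw [hχclass l x⁻¹ (h * x)]
  congr 2
  group

end Aux

/-- Subdivision consistency for the heat-kernel interaction measure on a compact group:
with the rescaling `β ↦ β/4`, integrating the heat-kernel densities over the four internal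
link variables of a subdivided plaquette reproduces the heat-kernel density at inverse
temperature `β` on the plaquette holonomy `G₁G₂G₃⁻¹G₄⁻¹`. -/
theorem heat_kernel_plaquette_subdivision_consistency
    {G : Type*} [Group G] [TopologicalSpace G] [IsTopologicalGroup G] [CompactSpace G]
    [MeasurableSpace G] [BorelSpace G]
    (μ : Measure G) [μ.IsHaarMeasure] [IsProbabilityMeasure μ]
    {Λ : Type*} [Countable Λ] [DecidableEq Λ]
    (χ : Λ → G → ℂ) (d c : Λ → ℝ)
    (hχcont : ∀ l, Continuous (χ l))
    (hχclass : ∀ l (x y : G), χ l (x * y) = χ l (y * x))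
    (hd : ∀ l, 0 < d l)
    (hbound : ∀ l (g : G), ‖χ l g‖ ≤ d l)
    (hschur : ∀ l m (g₁ g₂ : G),
      ∫ x, χ l (g₁ * x) * χ m (x⁻¹ * g₂) ∂μ =
        (if l = m then 1 else 0) * ((d l : ℂ))⁻¹ * χ l (g₁ * g₂))
    (hsum : ∀ s : ℝ, 0 < s → Summable fun l => (d l) ^ 2 * Real.exp (-(c l) * s))
    (β : ℝ) (hβ : 0 < β) (G₁ G₂ G₃ G₄ : G) :
    (∫ X₁, ∫ X₂, ∫ X₃, ∫ X₄,
        heatKernel d c χ (X₁⁻¹ * G₁ * X₂) (β / 4) *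
          heatKernel d c χ (X₂⁻¹ * G₂ * X₃) (β / 4) *
          heatKernel d c χ (X₃⁻¹ * G₃⁻¹ * X₄) (β / 4) *
          heatKernel d c χ (X₄⁻¹ * G₄⁻¹ * X₁) (β / 4) ∂μ ∂μ ∂μ ∂μ) =
      heatKernel d c χ (G₁ * G₂ * G₃⁻¹ * G₄⁻¹) β := by
  have h4 : (0 : ℝ) < β / 4 := by linarith
  have h2 : (0 : ℝ) < β / 2 := by linarith
  have h34 : (0 : ℝ) < β / 4 + β / 4 + β / 4 := by linarith
  have conv := fun {s t : ℝ} (hs : 0 < s) (ht : 0 < t) (a b : G) =>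
    heatKernel_conv μ χ d c hχcont hd hbound hschur hsum hs ht a b
  -- innermost integral over X₄
  have step4 : ∀ X₁ X₂ X₃ : G,
      (∫ X₄, heatKernel d c χ (X₁⁻¹ * G₁ * X₂) (β / 4) *
          heatKernel d c χ (X₂⁻¹ * G₂ * X₃) (β / 4) *
          heatKernel d c χ (X₃⁻¹ * G₃⁻¹ * X₄) (β / 4) *
          heatKernel d c χ (X₄⁻¹ * G₄⁻¹ * X₁) (β / 4) ∂μ) =
        heatKernel d c χ (X₁⁻¹ * G₁ * X₂) (β / 4) *
          (heatKernel d c χ (X₂⁻¹ * G₂ * X₃) (β / 4) *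
            heatKernel d c χ (X₃⁻¹ * G₃⁻¹ * (G₄⁻¹ * X₁)) (β / 4 + β / 4)) := by
    intro X₁ X₂ X₃
    have hre : ∀ X₄ : G,
        heatKernel d c χ (X₁⁻¹ * G₁ * X₂) (β / 4) *
          heatKernel d c χ (X₂⁻¹ * G₂ * X₃) (β / 4) *
          heatKernel d c χ (X₃⁻¹ * G₃⁻¹ * X₄) (β / 4) *
          heatKernel d c χ (X₄⁻¹ * G₄⁻¹ * X₁) (β / 4) =
        (heatKernel d c χ (X₁⁻¹ * G₁ * X₂) (β / 4) *
          heatKernel d c χ (X₂⁻¹ * G₂ * X₃) (β / 4)) *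
          (heatKernel d c χ ((X₃⁻¹ * G₃⁻¹) * X₄) (β / 4) *
            heatKernel d c χ (X₄⁻¹ * (G₄⁻¹ * X₁)) (β / 4)) := by
      intro X₄
      rw [mul_assoc X₄⁻¹ G₄⁻¹ X₁]
      ring
    simp only [hre]
    rw [MeasureTheory.integral_const_mul, conv h4 h4 (X₃⁻¹ * G₃⁻¹) (G₄⁻¹ * X₁), mul_assoc]
  -- integral over X₃
  have step3 : ∀ X₁ X₂ : G,
      (∫ X₃, heatKernel d c χ (X₁⁻¹ * G₁ * X₂) (β / 4) *
          (heatKernel d c χ (X₂⁻¹ * G₂ * X₃) (β / 4) *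
            heatKernel d c χ (X₃⁻¹ * G₃⁻¹ * (G₄⁻¹ * X₁)) (β / 4 + β / 4)) ∂μ) =
        heatKernel d c χ (X₁⁻¹ * G₁ * X₂) (β / 4) *
          heatKernel d c χ (X₂⁻¹ * G₂ * (G₃⁻¹ * (G₄⁻¹ * X₁))) (β / 4 + (β / 4 + β / 4)) := by
    intro X₁ X₂
    rw [MeasureTheory.integral_const_mul]
    congr 1
    have hre : ∀ X₃ : G,
        heatKernel d c χ (X₂⁻¹ * G₂ * X₃) (β / 4) *
          heatKernel d c χ (X₃⁻¹ * G₃⁻¹ * (G₄⁻¹ * X₁)) (β / 4 + β / 4) =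
        heatKernel d c χ ((X₂⁻¹ * G₂) * X₃) (β / 4) *
          heatKernel d c χ (X₃⁻¹ * (G₃⁻¹ * (G₄⁻¹ * X₁))) (β / 4 + β / 4) := by
      intro X₃
      rw [mul_assoc X₃⁻¹ G₃⁻¹ (G₄⁻¹ * X₁)]
    simp only [hre]
    rw [conv h4 (by linarith : (0:ℝ) < β / 4 + β / 4) (X₂⁻¹ * G₂) (G₃⁻¹ * (G₄⁻¹ * X₁))]
  -- integral over X₂
  have step2 : ∀ X₁ : G,
      (∫ X₂, heatKernel d c χ (X₁⁻¹ * G₁ * X₂) (β / 4) *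
          heatKernel d c χ (X₂⁻¹ * G₂ * (G₃⁻¹ * (G₄⁻¹ * X₁)))
            (β / 4 + (β / 4 + β / 4)) ∂μ) =
        heatKernel d c χ (X₁⁻¹ * (G₁ * (G₂ * (G₃⁻¹ * (G₄⁻¹ * X₁)))))
          (β / 4 + (β / 4 + (β / 4 + β / 4))) := by
    intro X₁
    have hre : ∀ X₂ : G,
        heatKernel d c χ (X₁⁻¹ * G₁ * X₂) (β / 4) *
          heatKernel d c χ (X₂⁻¹ * G₂ * (G₃⁻¹ * (G₄⁻¹ * X₁))) (β / 4 + (β / 4 + β / 4)) =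
        heatKernel d c χ ((X₁⁻¹ * G₁) * X₂) (β / 4) *
          heatKernel d c χ (X₂⁻¹ * (G₂ * (G₃⁻¹ * (G₄⁻¹ * X₁)))) (β / 4 + (β / 4 + β / 4)) := by
      intro X₂
      rw [mul_assoc X₂⁻¹ G₂ (G₃⁻¹ * (G₄⁻¹ * X₁))]
    simp only [hre]
    rw [conv h4 (by linarith : (0:ℝ) < β / 4 + (β / 4 + β / 4)) (X₁⁻¹ * G₁)
      (G₂ * (G₃⁻¹ * (G₄⁻¹ * X₁))), mul_assoc]
  -- integral over X₁ : class function property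
  have step1 : ∀ X₁ : G,
      heatKernel d c χ (X₁⁻¹ * (G₁ * (G₂ * (G₃⁻¹ * (G₄⁻¹ * X₁)))))
        (β / 4 + (β / 4 + (β / 4 + β / 4))) =
      heatKernel d c χ (G₁ * G₂ * G₃⁻¹ * G₄⁻¹) β := by
    intro X₁
    have harg : G₁ * (G₂ * (G₃⁻¹ * (G₄⁻¹ * X₁))) = (G₁ * G₂ * G₃⁻¹ * G₄⁻¹) * X₁ := by
      group
    have hβ4 : β / 4 + (β / 4 + (β / 4 + β / 4)) = β := by ring
    rw [harg, hβ4, heatKernel_conj χ d c hχclass X₁ (G₁ * G₂ * G₃⁻¹ * G₄⁻¹) β]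
  simp only [step4, step3, step2, step1]
  simp
end

section
/- For every β > 0 and every x ∈ ℝ, the SU(2) heat kernel character sum admits the Poisson-resummed (Jacobi-transformed) form: Σ_{m=1}^{∞} m · e^{−(m²−1)β/8} · sin(mπx) = 2(2π)^{3/2} · e^{β/8} · β^{−3/2} · Σ_{n∈ℤ} (x + 2n) · exp(−2π²(x + 2n)²/β). (With m = 2λ + 1 running over positive integers as λ runs over the highest weights 0, 1/2, 1, 3/2, … of SU(2), and after multiplying through by sin(πx), this is the identity between the spectral expansion K₂(g, β) = Σ_λ (2λ+1) e^{−λ(λ+1)β/2} sin((2λ+1)πx(g))/sin(πx(g)) and its Gaussian-sum form.) -/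
open Real



lemma su2_summable_g (β x : ℝ) (hβ : 0 < β) :
    Summable fun n : ℤ ↦ (n : ℝ) * Real.exp (-((n:ℝ)^2 * β / 8)) * Real.sin (n * Real.pi * x) := by
  have hT : 0 < β / (8 * Real.pi) := by positivity
  have h := summable_pow_mul_jacobiTheta₂_term_bound 0 hT 1
  simp only [Int.cast_abs, pow_one] at h
  refine h.of_norm_bounded fun n ↦ ?_
  have hexp : -Real.pi * (β / (8 * Real.pi) * (n:ℝ) ^ 2 - 2 * 0 * |(n:ℝ)|) = -((n:ℝ)^2 * β / 8) := by
    field_simp; ring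
  rw [hexp, norm_mul, norm_mul]
  calc ‖(n:ℝ)‖ * ‖Real.exp (-((n:ℝ)^2 * β / 8))‖ * ‖Real.sin (n * Real.pi * x)‖
      ≤ ‖(n:ℝ)‖ * ‖Real.exp (-((n:ℝ)^2 * β / 8))‖ * 1 := by
        gcongr
        rw [Real.norm_eq_abs]; exact Real.abs_sin_le_one _
    _ = |(n:ℝ)| * Real.exp (-((n:ℝ)^2 * β / 8)) := by
        rw [mul_one, Real.norm_eq_abs, Real.norm_eq_abs, abs_of_pos (Real.exp_pos _)]

set_option maxHeartbeats 1000000 in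
lemma su2_theta_eq (β x : ℝ) (hβ : 0 < β) :
    jacobiTheta₂' ((x:ℂ)/2) (Complex.I * ((β / (8*Real.pi) : ℝ) : ℂ)) =
      -2 * Real.pi * (((∑' n : ℤ, (n : ℝ) * Real.exp (-((n:ℝ)^2 * β / 8)) * Real.sin (n * Real.pi * x)) : ℝ) : ℂ) := by
  have hπ : (0:ℝ) < Real.pi := Real.pi_pos
  set c : ℝ := β / (8*Real.pi) with hc
  have hc0 : 0 < c := by positivity
  set τ : ℂ := Complex.I * (c:ℂ) with hτdef
  have hτ : 0 < τ.im := by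
    simp [hτdef, Complex.mul_im]
    exact hc0
  set z : ℂ := (x:ℂ)/2 with hz
  set f : ℤ → ℂ := fun n ↦ jacobiTheta₂'_term n z τ with hfdef
  have hf : HasSum f (jacobiTheta₂' z τ) := hasSum_jacobiTheta₂'_term z hτ
  have hfneg : HasSum (fun n ↦ f (-n)) (jacobiTheta₂' z τ) := ((Equiv.neg ℤ).hasSum_iff).mpr hf
  have hadd : HasSum (fun n ↦ f n + f (-n)) (jacobiTheta₂' z τ + jacobiTheta₂' z τ) := hf.add hfneg
  set g : ℤ → ℝ := fun n ↦ (n : ℝ) * Real.exp (-((n:ℝ)^2 * β / 8)) * Real.sin (n * Real.pi * x) with hgdef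
  have hg : HasSum g (∑' n, g n) := (su2_summable_g β x hβ).hasSum
  have hgc : HasSum (fun n ↦ ((g n : ℝ) : ℂ)) ((∑' n, g n : ℝ) : ℂ) := Complex.hasSum_ofReal.mpr hg
  have hgc' : HasSum (fun n ↦ (-4*Real.pi : ℂ) * ((g n : ℝ):ℂ)) ((-4*Real.pi:ℂ) * ((∑' n, g n : ℝ):ℂ)) :=
    hgc.mul_left _
  have harg : ∀ n : ℤ, 2*(Real.pi:ℂ)*Complex.I*(n:ℂ)*z + (Real.pi:ℂ)*Complex.I*(n:ℂ)^2*τ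
      = (((n:ℝ)*Real.pi*x : ℝ):ℂ)*Complex.I + ((-(((n:ℝ))^2*β/8) : ℝ):ℂ) := by
    intro n
    have hπc : (Real.pi:ℂ) ≠ 0 := Complex.ofReal_ne_zero.mpr (ne_of_gt hπ)
    rw [hz, hτdef, hc]
    push_cast
    field_simp
    ring_nf
    simp [Complex.I_sq]
    ring
  have key : ∀ n : ℤ, f n + f (-n) = (-4*Real.pi:ℂ) * ((g n : ℝ):ℂ) := by
    intro n
    rw [hfdef]
    simp only [jacobiTheta₂'_term, jacobiTheta₂_term, harg n, harg (-n)]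
    rw [Complex.exp_add, Complex.exp_add]
    push_cast [Real.sin_neg, Real.cos_neg]
    rw [Complex.exp_mul_I, Complex.exp_mul_I]
    simp only [neg_mul, neg_neg, Complex.cos_neg, Complex.sin_neg, neg_sq]
    rw [hgdef]
    push_cast [Complex.ofReal_exp]
    ring_nf
    rw [Complex.I_sq]
    ring
  have h2 : jacobiTheta₂' z τ + jacobiTheta₂' z τ = (-4*Real.pi:ℂ) * ((∑' n, g n : ℝ):ℂ) :=
    hadd.unique (by simpa only [← key] using hgc' : HasSum (fun n ↦ f n + f (-n)) _)
  linear_combination h2 / 2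

set_option maxHeartbeats 1000000 in
lemma su2_theta_eq2 (β x : ℝ) (hβ : 0 < β) :
    jacobiTheta₂' ((x:ℂ)/2) (Complex.I * ((β / (8*Real.pi) : ℝ) : ℂ)) =
      2 * Real.pi * ((((β / (8*Real.pi))^(-(3:ℝ)/2) : ℝ)) : ℂ) *
        (((∑' n : ℤ, ((n:ℝ) - x/2) * Real.exp (-(2*Real.pi^2*(x - 2*(n:ℝ))^2/β))) : ℝ) : ℂ) := by
  have hπ : (0:ℝ) < Real.pi := Real.pi_pos
  set c : ℝ := β / (8*Real.pi) with hc
  have hc0 : 0 < c := by positivity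
  set τ : ℂ := Complex.I * (c:ℂ) with hτdef
  have hτne : τ ≠ 0 := by
    simp [hτdef, Complex.I_ne_zero, Complex.ofReal_ne_zero, ne_of_gt hc0]
  set z : ℂ := (x:ℂ)/2 with hz
  -- explicit values
  have hσ : -1/τ = Complex.I * ((8*Real.pi/β : ℝ) : ℂ) := by
    rw [div_eq_iff hτne, hτdef, hc]
    push_cast
    have : (Real.pi:ℂ) ≠ 0 := Complex.ofReal_ne_zero.mpr (ne_of_gt hπ)
    have hβc : (β:ℂ) ≠ 0 := Complex.ofReal_ne_zero.mpr (ne_of_gt hβ)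
    field_simp
    ring_nf
    rw [Complex.I_sq]
  have hw : z/τ = -(Complex.I * ((4*Real.pi*x/β : ℝ) : ℂ)) := by
    rw [div_eq_iff hτne, hz, hτdef, hc]
    push_cast
    have : (Real.pi:ℂ) ≠ 0 := Complex.ofReal_ne_zero.mpr (ne_of_gt hπ)
    have hβc : (β:ℂ) ≠ 0 := Complex.ofReal_ne_zero.mpr (ne_of_gt hβ)
    field_simp
    ring_nf
    rw [Complex.I_sq]
    ring
  have hσim : 0 < (-1/τ).im := by
    rw [hσ]
    simp [Complex.mul_im]
    positivity
  -- the series at the transformed point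
  set v : ℤ → ℝ := fun n ↦ ((n:ℝ) - x/2) * Real.exp (8*Real.pi^2*((n:ℝ)*x - (n:ℝ)^2)/β) with hvdef
  have hG : ∀ n : ℤ, jacobiTheta₂_term n (z/τ) (-1/τ)
      = ((Real.exp (8*Real.pi^2*((n:ℝ)*x - (n:ℝ)^2)/β) : ℝ) : ℂ) := by
    intro n
    rw [jacobiTheta₂_term, hσ, hw, Complex.ofReal_exp]
    congr 1
    push_cast
    have hβc : (β:ℂ) ≠ 0 := Complex.ofReal_ne_zero.mpr (ne_of_gt hβ)
    field_simp
    ring_nf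
    rw [Complex.I_sq]
    ring
  have hkey : ∀ n : ℤ, jacobiTheta₂'_term n (z/τ) (-1/τ)
      - 2*(Real.pi:ℂ)*Complex.I*z * jacobiTheta₂_term n (z/τ) (-1/τ)
      = 2*(Real.pi:ℂ)*Complex.I * ((v n : ℝ) : ℂ) := by
    intro n
    rw [jacobiTheta₂'_term, hG n, hvdef]
    push_cast
    rw [hz]
    ring
  have hF : HasSum (fun n ↦ jacobiTheta₂'_term n (z/τ) (-1/τ)) (jacobiTheta₂' (z/τ) (-1/τ)) :=
    hasSum_jacobiTheta₂'_term _ hσim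
  have hGsum : HasSum (fun n ↦ jacobiTheta₂_term n (z/τ) (-1/τ)) (jacobiTheta₂ (z/τ) (-1/τ)) :=
    hasSum_jacobiTheta₂_term _ hσim
  have hcomb : HasSum (fun n ↦ jacobiTheta₂'_term n (z/τ) (-1/τ)
      - 2*(Real.pi:ℂ)*Complex.I*z * jacobiTheta₂_term n (z/τ) (-1/τ))
      (jacobiTheta₂' (z/τ) (-1/τ) - 2*(Real.pi:ℂ)*Complex.I*z * jacobiTheta₂ (z/τ) (-1/τ)) :=
    hF.sub (hGsum.mul_left _)
  have h2πI : (2*(Real.pi:ℂ)*Complex.I) ≠ 0 := by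
    simp [Complex.I_ne_zero, Complex.ofReal_ne_zero, ne_of_gt hπ]
  have hvc : HasSum (fun n ↦ ((v n : ℝ) : ℂ))
      ((jacobiTheta₂' (z/τ) (-1/τ) - 2*(Real.pi:ℂ)*Complex.I*z * jacobiTheta₂ (z/τ) (-1/τ))
        / (2*(Real.pi:ℂ)*Complex.I)) := by
    have hdiv := hcomb.div_const (2*(Real.pi:ℂ)*Complex.I)
    have heq : (fun n : ℤ ↦ ((v n : ℝ) : ℂ)) = fun n ↦ (jacobiTheta₂'_term n (z/τ) (-1/τ)
        - 2*(Real.pi:ℂ)*Complex.I*z * jacobiTheta₂_term n (z/τ) (-1/τ)) / (2*(Real.pi:ℂ)*Complex.I) := by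
      funext n
      rw [hkey n]
      field_simp
    rw [heq]
    exact hdiv
  have hvsum : Summable v := Complex.summable_ofReal.mp hvc.summable
  have hVc : (((∑' n, v n : ℝ)) : ℂ)
      = (jacobiTheta₂' (z/τ) (-1/τ) - 2*(Real.pi:ℂ)*Complex.I*z * jacobiTheta₂ (z/τ) (-1/τ))
        / (2*(Real.pi:ℂ)*Complex.I) := by
    rw [Complex.ofReal_tsum]
    exact hvc.tsum_eq
  have hcombo : jacobiTheta₂' (z/τ) (-1/τ) - 2*(Real.pi:ℂ)*Complex.I*z * jacobiTheta₂ (z/τ) (-1/τ)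
      = 2*(Real.pi:ℂ)*Complex.I * (((∑' n, v n : ℝ)) : ℂ) := by
    rw [hVc]
    field_simp
  -- scalar computations
  have hIτ : -Complex.I*τ = (c:ℂ) := by
    rw [hτdef]
    ring_nf
    rw [Complex.I_sq]
    ring
  have hpow : ((c:ℂ))^(1/2:ℂ) = (((c^((1:ℝ)/2) : ℝ)):ℂ) := by
    rw [Complex.ofReal_cpow hc0.le]
    norm_num
  have hexpK : -(Real.pi:ℂ)*Complex.I*z^2/τ = ((-(2*Real.pi^2*x^2/β) : ℝ):ℂ) := by
    rw [div_eq_iff hτne, hz, hτdef, hc]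
    push_cast
    have : (Real.pi:ℂ) ≠ 0 := Complex.ofReal_ne_zero.mpr (ne_of_gt hπ)
    have hβc : (β:ℂ) ≠ 0 := Complex.ofReal_ne_zero.mpr (ne_of_gt hβ)
    field_simp
    ring_nf
  have hτinv : τ⁻¹ = -Complex.I * ((c⁻¹ : ℝ):ℂ) := by
    rw [hτdef, mul_inv, Complex.inv_I]
    push_cast
    ring
  -- sum identity over ℝ
  have hU : (∑' n : ℤ, ((n:ℝ) - x/2) * Real.exp (-(2*Real.pi^2*(x - 2*(n:ℝ))^2/β)))
      = Real.exp (-(2*Real.pi^2*x^2/β)) * ∑' n, v n := by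
    rw [← tsum_mul_left]
    congr 1
    funext n
    rw [hvdef]
    rw [show -(2*Real.pi^2*(x - 2*(n:ℝ))^2/β)
      = -(2*Real.pi^2*x^2/β) + 8*Real.pi^2*((n:ℝ)*x - (n:ℝ)^2)/β by field_simp; ring, Real.exp_add]
    ring
  have hrpow : c^(-(3:ℝ)/2) = (c^((1:ℝ)/2))⁻¹ * c⁻¹ := by
    rw [← Real.rpow_neg_one c, ← Real.rpow_neg hc0.le, ← Real.rpow_add hc0]
    norm_num
  -- assemble
  rw [jacobiTheta₂'_functional_equation z τ, hcombo, hIτ, hpow, hexpK, hU, hrpow]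
  rw [div_eq_mul_inv _ τ, hτinv]
  set V : ℝ := ∑' n, v n with hVdef
  rw [← Complex.ofReal_exp]
  simp only [Complex.ofReal_mul, Complex.ofReal_inv]
  ring_nf
  rw [Complex.I_sq]
  ring_nf


/-- Poisson-resummed (Jacobi-transformed) form of the `SU(2)` heat kernel character sum:
`Σ_{m=1}^∞ m e^{−(m²−1)β/8} sin(mπx) = 2(2π)^{3/2} e^{β/8} β^{−3/2} Σ_{n∈ℤ} (x+2n) e^{−2π²(x+2n)²/β}`,
where `m = 2λ + 1` runs over the positive integers as `λ` runs over the highest weights of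
`SU(2)`. -/
theorem su2_heat_kernel_poisson_resummation (β : ℝ) (hβ : 0 < β) (x : ℝ) :
    ∑' m : ℕ+, (m : ℝ) * Real.exp (-(((m : ℝ) ^ 2 - 1) * β / 8)) * Real.sin (m * Real.pi * x) =
      2 * (2 * Real.pi) ^ ((3 : ℝ) / 2) * Real.exp (β / 8) / β ^ ((3 : ℝ) / 2) *
        ∑' n : ℤ, (x + 2 * (n : ℝ)) * Real.exp (-(2 * Real.pi ^ 2 * (x + 2 * (n : ℝ)) ^ 2 / β)) := by
  have hπ : (0:ℝ) < Real.pi := Real.pi_pos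
  set g : ℤ → ℝ := fun n ↦ (n : ℝ) * Real.exp (-((n:ℝ)^2 * β / 8)) * Real.sin (n * Real.pi * x)
    with hgdef
  set S : ℝ := ∑' n, g n with hSdef
  set T : ℝ := ∑' n : ℤ, (x + 2 * (n : ℝ)) * Real.exp (-(2 * Real.pi ^ 2 * (x + 2 * (n : ℝ)) ^ 2 / β))
    with hTdef
  set U : ℝ := ∑' n : ℤ, ((n:ℝ) - x/2) * Real.exp (-(2*Real.pi^2*(x - 2*(n:ℝ))^2/β)) with hUdef
  -- step A: S in terms of U
  have hSU : -(2*Real.pi)*S = 2*Real.pi*((β / (8*Real.pi))^(-(3:ℝ)/2)) * U := by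
    have h1 := su2_theta_eq β x hβ
    have h2 := su2_theta_eq2 β x hβ
    have h3 := h1.symm.trans h2
    have h4 : ((-(2*Real.pi)*S : ℝ) : ℂ) = ((2*Real.pi*((β / (8*Real.pi))^(-(3:ℝ)/2)) * U : ℝ) : ℂ) := by
      push_cast
      rw [hSdef, hUdef]
      linear_combination h3
    exact_mod_cast h4
  -- step B: U = -T/2
  have hUT : U = -T/2 := by
    rw [hUdef, hTdef]
    calc (∑' n : ℤ, ((n:ℝ) - x/2) * Real.exp (-(2*Real.pi^2*(x - 2*(n:ℝ))^2/β)))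
        = ∑' n : ℤ, (((-n:ℤ):ℝ) - x/2) * Real.exp (-(2*Real.pi^2*(x - 2*((-n:ℤ):ℝ))^2/β)) :=
          ((Equiv.neg ℤ).tsum_eq (fun n : ℤ ↦ ((n:ℝ) - x/2) * Real.exp (-(2*Real.pi^2*(x - 2*(n:ℝ))^2/β)))).symm
      _ = ∑' n : ℤ, (-(1:ℝ)/2) * ((x + 2*(n:ℝ)) * Real.exp (-(2 * Real.pi ^ 2 * (x + 2 * (n:ℝ)) ^ 2 / β))) := by
          apply tsum_congr
          intro n
          push_cast
          ring_nf
      _ = -(∑' n : ℤ, (x + 2*(n:ℝ)) * Real.exp (-(2 * Real.pi ^ 2 * (x + 2 * (n:ℝ)) ^ 2 / β)))/2 := by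
          rw [tsum_mul_left]
          ring
  -- hence S = c^{-3/2} T / 2
  have hST : S = ((β / (8*Real.pi))^(-(3:ℝ)/2)) * T / 2 := by
    rw [hUT] at hSU
    have h5 : (2*Real.pi) * S = (2*Real.pi) * (((β / (8*Real.pi))^(-(3:ℝ)/2)) * T / 2) := by
      linear_combination -hSU
    exact mul_left_cancel₀ (by positivity : (2*Real.pi:ℝ) ≠ 0) h5
  -- LHS reduction
  have hgS : HasSum g S := (su2_summable_g β x hβ).hasSum
  have hnat : HasSum (fun n : ℕ ↦ g (n:ℤ) + g (-(n:ℤ))) (S + g 0) := hgS.nat_add_neg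
  have hg0 : g 0 = 0 := by simp [hgdef]
  have heven : ∀ n : ℕ, g (-(n:ℤ)) = g (n:ℤ) := by
    intro n
    rw [hgdef]
    push_cast
    simp only [neg_mul, Real.sin_neg]
    ring
  have h2g : HasSum (fun n : ℕ ↦ 2 * g (n:ℤ)) S := by
    have h := hnat
    rw [hg0, add_zero] at h
    have e : (fun n : ℕ ↦ g (n:ℤ) + g (-(n:ℤ))) = fun n : ℕ ↦ 2 * g (n:ℤ) := by
      funext n
      rw [heven n]
      ring
    rwa [e] at h
  have hhalf : HasSum (fun n : ℕ ↦ g (n:ℤ)) (S/2) := by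
    have h := h2g.div_const 2
    have e : (fun n : ℕ ↦ (2 * g (n:ℤ))/2) = fun n : ℕ ↦ g (n:ℤ) := by
      funext n
      ring
    rwa [e] at h
  have hrange : ∀ n : ℕ, n ∉ Set.range (fun m : ℕ+ ↦ (m:ℕ)) → g (n:ℤ) = 0 := by
    intro n hn
    have hn0 : n = 0 := by
      by_contra h
      exact hn ⟨⟨n, Nat.pos_of_ne_zero h⟩, rfl⟩
    subst hn0
    simpa using hg0
  have hpnat : HasSum (fun m : ℕ+ ↦ g ((m:ℕ):ℤ)) (S/2) :=
    (Function.Injective.hasSum_iff (fun a b h ↦ PNat.coe_injective h) hrange).mpr hhalf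
  have hterm : ∀ m : ℕ+, (m : ℝ) * Real.exp (-(((m : ℝ) ^ 2 - 1) * β / 8)) * Real.sin (m * Real.pi * x)
      = Real.exp (β/8) * g ((m:ℕ):ℤ) := by
    intro m
    rw [hgdef]
    push_cast
    rw [show (-(((m:ℝ)^2 - 1) * β / 8)) = β/8 + -((m:ℝ)^2 * β/8) by ring, Real.exp_add]
    ring
  have hβpow : (0:ℝ) < β^((3:ℝ)/2) := Real.rpow_pos_of_pos hβ _
  have h8π : (0:ℝ) < 8*Real.pi := by positivity
  have h4 : (4:ℝ)^((3:ℝ)/2) = 8 := by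
    rw [show (4:ℝ) = 2^(2:ℕ) by norm_num, ← Real.rpow_natCast 2 2,
      ← Real.rpow_mul (by norm_num : (0:ℝ) ≤ 2)]
    rw [show ((2:ℕ):ℝ) * ((3:ℝ)/2) = ((3:ℕ):ℝ) by norm_num, Real.rpow_natCast]
    norm_num
  have hC : (β/(8*Real.pi))^(-(3:ℝ)/2) = 8 * (2*Real.pi)^((3:ℝ)/2) / β^((3:ℝ)/2) := by
    rw [show (-(3:ℝ)/2) = -((3:ℝ)/2) by norm_num,
      Real.rpow_neg (le_of_lt (div_pos hβ h8π)),
      Real.div_rpow hβ.le h8π.le, inv_div,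
      show (8*Real.pi : ℝ) = 4*(2*Real.pi) by ring,
      Real.mul_rpow (by norm_num) (by positivity), h4]
  calc ∑' m : ℕ+, (m : ℝ) * Real.exp (-(((m : ℝ) ^ 2 - 1) * β / 8)) * Real.sin (m * Real.pi * x)
      = ∑' m : ℕ+, Real.exp (β/8) * g ((m:ℕ):ℤ) := tsum_congr hterm
    _ = Real.exp (β/8) * (S/2) := (hpnat.mul_left _).tsum_eq
    _ = 2 * (2 * Real.pi) ^ ((3 : ℝ) / 2) * Real.exp (β / 8) / β ^ ((3 : ℝ) / 2) * T := by
        rw [hST, hC]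
        field_simp
        ring
end

section
/- Let G = SU(2) be the group of 2×2 complex special unitary matrices. If a subgroup H ≤ G is the centralizer of some subset S ⊆ G (i.e. H = {h ∈ G : hs = sh for all s ∈ S}), then exactly one of the following holds: H = G; or H is conjugate in G to the diagonal maximal torus T = {diag(z, z̄) : z ∈ ℂ, |z| = 1}; or H is the center Z(G) = {I, −I}. (Hence SU(2) has exactly three conjugacy classes of Howe subgroups, corresponding to the three strata of the SU(2) gauge theory: the generic stratum with isotropy group ℤ₂, the U(1)-reducible stratum, and the stratum with isotropy group SU(2).) -/
open Matrix Complex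
abbrev M2 := Matrix (Fin 2) (Fin 2) ℂ
local notation "conj'" => starRingEnd ℂ

def SU2 : Set (Matrix (Fin 2) (Fin 2) ℂ) :=
  {g | g ∈ Matrix.specialUnitaryGroup (Fin 2) ℂ}

lemma su2_star_eq (g : M2) (hg : g ∈ SU2) : star g = adjugate g := by
  rw [SU2, Set.mem_setOf_eq, mem_specialUnitaryGroup_iff, mem_unitaryGroup_iff'] at hg
  obtain ⟨hu, hd⟩ := hg
  have h2 : g * adjugate g = 1 := by rw [Matrix.mul_adjugate, hd, one_smul]
  calc star g = star g * (g * adjugate g) := by rw [h2, mul_one]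
    _ = (star g * g) * adjugate g := by rw [mul_assoc]
    _ = adjugate g := by rw [hu, one_mul]

lemma su2_det (g : M2) (hg : g ∈ SU2) : g 0 0 * g 1 1 - g 0 1 * g 1 0 = 1 := by
  rw [SU2, Set.mem_setOf_eq, mem_specialUnitaryGroup_iff] at hg
  have hd := hg.2
  rwa [Matrix.det_fin_two] at hd

lemma su2_entries (g : M2) (hg : g ∈ SU2) :
    g 1 1 = conj' (g 0 0) ∧ g 1 0 = - conj' (g 0 1) ∧
    g 0 0 * conj' (g 0 0) + g 0 1 * conj' (g 0 1) = 1 := by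
  have h := su2_star_eq g hg
  have hadj : adjugate g = !![g 1 1, -(g 0 1); -(g 1 0), g 0 0] := by
    rw [← Matrix.etaExpand_eq g, Matrix.adjugate_fin_two]
  rw [hadj] at h
  have h00 := congrFun (congrFun h 0) 0
  have h10 := congrFun (congrFun h 1) 0
  simp [Matrix.star_apply] at h00 h10
  have hd := su2_det g hg
  refine ⟨h00.symm, ?_, ?_⟩
  · linear_combination h10
  · rw [h00, h10]; linear_combination hd

lemma mem_SU2 (a b : ℂ) (h : a * conj' a + b * conj' b = 1) :
    !![a, b; -conj' b, conj' a] ∈ SU2 := by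
  rw [SU2, Set.mem_setOf_eq, mem_specialUnitaryGroup_iff, mem_unitaryGroup_iff]
  constructor
  · ext i j
    fin_cases i <;> fin_cases j <;>
      simp [Matrix.mul_apply, Fin.sum_univ_two, Matrix.star_apply, Matrix.one_apply] <;>
      first | linear_combination h | ring
  · rw [Matrix.det_fin_two]
    simp
    linear_combination h

def SU2Torus : Set (Matrix (Fin 2) (Fin 2) ℂ) :=
  {g | ∃ z : ℂ, ‖z‖ = 1 ∧ g = Matrix.diagonal ![z, (starRingEnd ℂ) z]}

lemma su2_eta (g : M2) (hg : g ∈ SU2) :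
    g = !![g 0 0, g 0 1; -conj' (g 0 1), conj' (g 0 0)] := by
  obtain ⟨h1, h2, _⟩ := su2_entries g hg
  ext i j
  fin_cases i <;> fin_cases j <;> simp [h1, h2]

lemma SU2_one : (1 : M2) ∈ SU2 := by
  rw [SU2, Set.mem_setOf_eq, mem_specialUnitaryGroup_iff, mem_unitaryGroup_iff]
  simp

lemma SU2_neg_one : (-1 : M2) ∈ SU2 := by
  rw [SU2, Set.mem_setOf_eq, mem_specialUnitaryGroup_iff, mem_unitaryGroup_iff]
  constructor
  · simp
  · simp [Matrix.det_fin_two, Matrix.one_apply]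

lemma SU2_mul {g h : M2} (hg : g ∈ SU2) (hh : h ∈ SU2) : g * h ∈ SU2 := by
  rw [SU2, Set.mem_setOf_eq] at *
  exact mul_mem hg hh

lemma SU2_det {g : M2} (hg : g ∈ SU2) : g.det = 1 := by
  rw [SU2, Set.mem_setOf_eq, mem_specialUnitaryGroup_iff] at hg
  exact hg.2

lemma SU2_mul_inv {g : M2} (hg : g ∈ SU2) : g * g⁻¹ = 1 :=
  Matrix.mul_nonsing_inv g (by rw [SU2_det hg]; exact isUnit_one)

lemma SU2_inv_mul {g : M2} (hg : g ∈ SU2) : g⁻¹ * g = 1 :=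
  Matrix.nonsing_inv_mul g (by rw [SU2_det hg]; exact isUnit_one)

lemma SU2_inv_eq_star {g : M2} (hg : g ∈ SU2) : g⁻¹ = star g := by
  rw [SU2, Set.mem_setOf_eq, mem_specialUnitaryGroup_iff, mem_unitaryGroup_iff'] at hg
  exact Matrix.inv_eq_left_inv hg.1

lemma SU2_inv_mem {g : M2} (hg : g ∈ SU2) : g⁻¹ ∈ SU2 := by
  rw [SU2_inv_eq_star hg]
  rw [SU2, Set.mem_setOf_eq, mem_specialUnitaryGroup_iff, mem_unitaryGroup_iff] at hg ⊢
  refine ⟨by rw [star_star]; exact (mem_unitaryGroup_iff'.mp (mem_unitaryGroup_iff.mpr hg.1)), ?_⟩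
  have : star g = gᴴ := rfl
  rw [this, Matrix.det_conjTranspose, hg.2, star_one]

lemma diag_eq (z : ℂ) : Matrix.diagonal ![z, conj' z] = !![z, 0; -conj' 0, conj' z] := by
  ext i j
  fin_cases i <;> fin_cases j <;> simp [Matrix.diagonal]

lemma torus_subset_SU2 : SU2Torus ⊆ SU2 := by
  rintro g ⟨z, hz, rfl⟩
  rw [diag_eq]
  apply mem_SU2
  simp only [map_zero, mul_zero, add_zero]
  rw [Complex.mul_conj]
  norm_cast
  rw [Complex.normSq_eq_norm_sq]
  simp [hz]

lemma torus_comm {x y : M2} (hx : x ∈ SU2Torus) (hy : y ∈ SU2Torus) : x * y = y * x := by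
  obtain ⟨z, _, rfl⟩ := hx
  obtain ⟨w, _, rfl⟩ := hy
  rw [Matrix.diagonal_mul_diagonal, Matrix.diagonal_mul_diagonal]
  congr 1
  ext i
  fin_cases i <;> simp [mul_comm]

lemma one_mem_torus : (1 : M2) ∈ SU2Torus :=
  ⟨1, by norm_num, by ext i j; fin_cases i <;> fin_cases j <;> simp [Matrix.one_apply]⟩

lemma neg_one_mem_torus : (-1 : M2) ∈ SU2Torus :=
  ⟨-1, by norm_num, by ext i j; fin_cases i <;> fin_cases j <;> simp [Matrix.one_apply]⟩

lemma mem_torus_of_su2_diag {h : M2} (hh : h ∈ SU2) (h01 : h 0 1 = 0) : h ∈ SU2Torus := by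
  obtain ⟨h1, h2, h3⟩ := su2_entries h hh
  refine ⟨h 0 0, ?_, ?_⟩
  · rw [h01] at h3
    simp only [map_zero, mul_zero, add_zero] at h3
    rw [Complex.mul_conj] at h3
    norm_cast at h3
    rw [Complex.normSq_eq_norm_sq] at h3
    nlinarith [norm_nonneg (h 0 0)]
  · ext i j
    fin_cases i <;> fin_cases j <;> simp [Matrix.diagonal, h1, h2, h01]

lemma cent_diag {a : ℂ} (hne : a ≠ conj' a) {h : M2} (hh : h ∈ SU2)
    (hc : h * Matrix.diagonal ![a, conj' a] = Matrix.diagonal ![a, conj' a] * h) :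
    h ∈ SU2Torus := by
  apply mem_torus_of_su2_diag hh
  have e := congrFun (congrFun hc 0) 1
  simp [Matrix.mul_apply, Fin.sum_univ_two, Matrix.diagonal] at e
  -- e : h 0 1 * conj' a = a * h 0 1
  have e2 : h 0 1 * (conj' a - a) = 0 := by linear_combination e
  rcases mul_eq_zero.mp e2 with e3 | e3
  · exact e3
  · exact absurd (by linear_combination -e3) hne

lemma su2_norms {g : M2} (hg : g ∈ SU2) :
    Complex.normSq (g 0 0) + Complex.normSq (g 0 1) = 1 := by
  obtain ⟨_, _, h3⟩ := su2_entries g hg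
  rw [Complex.mul_conj, Complex.mul_conj] at h3
  norm_cast at h3

lemma su2_diagonalize {g : M2} (hg : g ∈ SU2) (hg1 : g ≠ 1) (hg2 : g ≠ -1) :
    ∃ γ ∈ SU2, ∃ a : ℂ, ‖a‖ = 1 ∧ a ≠ conj' a ∧
      g = γ * Matrix.diagonal ![a, conj' a] * γ⁻¹ := by
  set a := g 0 0 with ha_def
  set b := g 0 1 with hb_def
  have hnorm : a * conj' a + b * conj' b = 1 := (su2_entries g hg).2.2
  have hns : Complex.normSq a + Complex.normSq b = 1 := su2_norms hg
  have hge : g = !![a, b; -conj' b, conj' a] := su2_eta g hg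
  by_cases hb : b = 0
  · -- g is already diagonal
    have hna : Complex.normSq a = 1 := by rw [hb] at hns; simpa using hns
    refine ⟨1, SU2_one, a, ?_, ?_, ?_⟩
    · have := Real.sqrt_eq_one.mpr hna
      rwa [← Complex.norm_def] at this
    · intro hcon
      have him : a.im = 0 := (Complex.conj_eq_iff_im.mp hcon.symm)
      have hre : (a.re - 1) * (a.re + 1) = 0 := by
        rw [Complex.normSq_apply, him] at hna; nlinarith
      rcases mul_eq_zero.mp hre with h | h
      · apply hg1
        have ha1 : a = 1 := Complex.ext (by simp; linarith) (by simp [him])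
        rw [hge, hb, ha1]
        ext i j
        fin_cases i <;> fin_cases j <;> simp [Matrix.one_apply]
      · apply hg2
        have ha1 : a = -1 := Complex.ext (by simp; linarith) (by simp [him])
        rw [hge, hb, ha1]
        ext i j
        fin_cases i <;> fin_cases j <;> simp [Matrix.one_apply]
    · rw [inv_one, mul_one, one_mul, hge, hb, diag_eq]
  · -- b ≠ 0 : genuinely diagonalize
    set x := a.re with hx_def
    set y := a.im with hy_def
    have hbpos : 0 < Complex.normSq b := by
      rcases lt_or_eq_of_le (Complex.normSq_nonneg b) with h | h
      · exact h
      · exact absurd (Complex.normSq_eq_zero.mp h.symm) hb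
    have hx2 : x ^ 2 + y ^ 2 + Complex.normSq b = 1 := by
      rw [Complex.normSq_apply] at hns; nlinarith
    have h1x : 0 < 1 - x ^ 2 := by nlinarith
    set s := Real.sqrt (1 - x ^ 2) with hs_def
    have hspos : 0 < s := Real.sqrt_pos.mpr h1x
    have hs2 : s ^ 2 = 1 - x ^ 2 := Real.sq_sqrt h1x.le
    set lam : ℂ := (x : ℂ) + (s : ℂ) * Complex.I with hlam_def
    have hlam_re : lam.re = x := by simp [hlam_def]
    have hlam_im : lam.im = s := by simp [hlam_def]
    have hconj_lam : conj' lam = (x : ℂ) - (s : ℂ) * Complex.I := by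
      simp [hlam_def, Complex.conj_ofReal]; ring
    have hs2c : (s : ℂ) ^ 2 = 1 - (x : ℂ) ^ 2 := by
      norm_cast
    have ha_xy : a = (x : ℂ) + (y : ℂ) * Complex.I := (Complex.re_add_im a).symm
    have hsum : a + conj' a = 2 * (x : ℂ) := by
      rw [Complex.add_conj]; norm_cast
    have hchar : lam ^ 2 - (a + conj' a) * lam + 1 = 0 := by
      rw [hsum, hlam_def]
      linear_combination ((s:ℂ)^2) * Complex.I_sq - hs2c
    have hchar2 : (conj' lam) ^ 2 - (a + conj' a) * (conj' lam) + 1 = 0 := by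
      rw [hsum, hconj_lam]
      linear_combination ((s:ℂ)^2) * Complex.I_sq - hs2c
    have hlam_norm : ‖lam‖ = 1 := by
      have : Complex.normSq lam = 1 := by
        rw [Complex.normSq_apply, hlam_re, hlam_im]; nlinarith
      have := Real.sqrt_eq_one.mpr this
      rwa [← Complex.norm_def] at this
    have hlam_ne : lam ≠ conj' lam := by
      intro hcon
      have := Complex.conj_eq_iff_im.mp hcon.symm
      rw [hlam_im] at this
      exact hspos.ne' this
    set n := Real.sqrt (Complex.normSq b + (s - y) ^ 2) with hn_def
    have hnpos : 0 < n := Real.sqrt_pos.mpr (by nlinarith)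
    have hn2 : n ^ 2 = Complex.normSq b + (s - y) ^ 2 := Real.sq_sqrt (by nlinarith)
    have hnC : (n : ℂ) ≠ 0 := by exact_mod_cast hnpos.ne'
    have hn2c : (n : ℂ) ^ 2 = b * conj' b + ((s : ℂ) - (y : ℂ)) ^ 2 := by
      rw [Complex.mul_conj]
      norm_cast
    set p : ℂ := b / n with hp_def
    set q : ℂ := -(conj' lam - conj' a) / n with hq_def
    set γ : M2 := !![p, q; -conj' q, conj' p] with hγ_def
    have hconj_n : conj' ((n : ℝ) : ℂ) = (n : ℂ) := Complex.conj_ofReal n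
    have hconj_q : conj' q = -(lam - a) / n := by
      rw [hq_def]
      simp [map_div₀, Complex.conj_ofReal]
    have hconj_p : conj' p = conj' b / n := by
      rw [hp_def]
      simp [map_div₀, Complex.conj_ofReal]
    have hlam_sub : lam - a = ((s : ℂ) - (y : ℂ)) * Complex.I := by
      rw [hlam_def, ha_xy]; ring
    have hγSU : γ ∈ SU2 := by
      rw [hγ_def]
      apply mem_SU2
      rw [hconj_p, hconj_q, hp_def, hq_def, hconj_lam, ha_xy]
      field_simp
      simp only [map_add, map_mul, Complex.conj_ofReal, Complex.conj_I]
      linear_combination -hn2c + (2*(y:ℂ)*(s:ℂ) - (y:ℂ)^2 - (s:ℂ)^2) * Complex.I_sq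
    have hp' : p * (n : ℂ) = b := by rw [hp_def]; field_simp
    have hq' : q * (n : ℂ) = -(conj' lam - conj' a) := by rw [hq_def]; field_simp
    have hcp' : conj' p * (n : ℂ) = conj' b := by rw [hconj_p]; field_simp
    have hcq' : conj' q * (n : ℂ) = -(lam - a) := by rw [hconj_q]; field_simp
    have E00 : a * p + b * (-conj' q) = p * lam := by
      apply mul_right_cancel₀ hnC
      linear_combination (a - lam) * hp' + (-b) * hcq'
    have E10 : -conj' b * p + conj' a * (-conj' q) = (-conj' q) * lam := by
      apply mul_right_cancel₀ hnC
      linear_combination (-conj' b) * hp' + (lam - conj' a) * hcq' - hchar - hnorm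
    have E01 : a * q + b * conj' p = q * conj' lam := by
      apply mul_right_cancel₀ hnC
      linear_combination (a - conj' lam) * hq' + b * hcp' + hchar2 + hnorm
    have E11 : -conj' b * q + conj' a * conj' p = conj' p * conj' lam := by
      apply mul_right_cancel₀ hnC
      linear_combination (-conj' b) * hq' + (conj' a - conj' lam) * hcp'
    have hcomm : g * γ = γ * Matrix.diagonal ![lam, conj' lam] := by
      rw [hge, hγ_def]
      ext i j
      fin_cases i <;> fin_cases j
      · simpa [Matrix.mul_apply, Fin.sum_univ_two, Matrix.diagonal] using E00
      · simpa [Matrix.mul_apply, Fin.sum_univ_two, Matrix.diagonal] using E01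
      · simpa [Matrix.mul_apply, Fin.sum_univ_two, Matrix.diagonal] using E10
      · simpa [Matrix.mul_apply, Fin.sum_univ_two, Matrix.diagonal] using E11
    exact ⟨γ, hγSU, lam, hlam_norm, hlam_ne, by
      rw [← hcomm, mul_assoc, SU2_mul_inv hγSU, mul_one]⟩

lemma conj_cancel_left {γ x : M2} (hγ : γ ∈ SU2) : γ * (γ⁻¹ * x * γ) * γ⁻¹ = x := by
  have h1 := SU2_mul_inv hγ
  calc γ * (γ⁻¹ * x * γ) * γ⁻¹ = (γ * γ⁻¹) * x * (γ * γ⁻¹) := by noncomm_ring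
    _ = x := by rw [h1]; simp

lemma conj_cancel_right {γ x : M2} (hγ : γ ∈ SU2) : γ⁻¹ * (γ * x * γ⁻¹) * γ = x := by
  have h1 := SU2_inv_mul hγ
  calc γ⁻¹ * (γ * x * γ⁻¹) * γ = (γ⁻¹ * γ) * x * (γ⁻¹ * γ) := by noncomm_ring
    _ = x := by rw [h1]; simp

lemma mem_conjT_iff {γ x : M2} (hγ : γ ∈ SU2) :
    x ∈ (fun m => γ * m * γ⁻¹) '' SU2Torus ↔ γ⁻¹ * x * γ ∈ SU2Torus := by
  constructor
  · rintro ⟨t, ht, rfl⟩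
    simpa [conj_cancel_right hγ] using ht
  · intro h
    exact ⟨γ⁻¹ * x * γ, h, conj_cancel_left hγ⟩

lemma conjT_subset_SU2 {γ : M2} (hγ : γ ∈ SU2) :
    (fun m => γ * m * γ⁻¹) '' SU2Torus ⊆ SU2 := by
  rintro x ⟨t, ht, rfl⟩
  exact SU2_mul (SU2_mul hγ (torus_subset_SU2 ht)) (SU2_inv_mem hγ)

lemma conjT_comm {γ : M2} (hγ : γ ∈ SU2) {x y : M2}
    (hx : x ∈ (fun m => γ * m * γ⁻¹) '' SU2Torus)
    (hy : y ∈ (fun m => γ * m * γ⁻¹) '' SU2Torus) : x * y = y * x := by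
  obtain ⟨t, ht, rfl⟩ := hx
  obtain ⟨u, hu, rfl⟩ := hy
  have h1 := SU2_inv_mul hγ
  have key : t * u = u * t := torus_comm ht hu
  calc (γ * t * γ⁻¹) * (γ * u * γ⁻¹) = γ * (t * (γ⁻¹ * γ) * u) * γ⁻¹ := by noncomm_ring
    _ = γ * (t * u) * γ⁻¹ := by rw [h1]; noncomm_ring
    _ = γ * (u * t) * γ⁻¹ := by rw [key]
    _ = γ * (u * (γ⁻¹ * γ) * t) * γ⁻¹ := by rw [h1]; noncomm_ring
    _ = (γ * u * γ⁻¹) * (γ * t * γ⁻¹) := by noncomm_ring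

lemma cent_noncentral {g : M2} (hg : g ∈ SU2) (hg1 : g ≠ 1) (hg2 : g ≠ -1) :
    ∃ γ ∈ SU2, {h : M2 | h ∈ SU2 ∧ h * g = g * h} = (fun x => γ * x * γ⁻¹) '' SU2Torus := by
  obtain ⟨γ, hγ, a, ha, hane, hgd⟩ := su2_diagonalize hg hg1 hg2
  set D := Matrix.diagonal ![a, conj' a] with hD
  have hgγ : g * γ = γ * D := by
    rw [hgd, mul_assoc, SU2_inv_mul hγ, mul_one]
  have hγg : γ⁻¹ * g = D * γ⁻¹ := by
    rw [hgd]
    calc γ⁻¹ * (γ * D * γ⁻¹) = (γ⁻¹ * γ) * D * γ⁻¹ := by noncomm_ring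
      _ = D * γ⁻¹ := by rw [SU2_inv_mul hγ]; simp
  refine ⟨γ, hγ, ?_⟩
  ext h
  simp only [Set.mem_setOf_eq, mem_conjT_iff hγ]
  constructor
  · rintro ⟨hh, hc⟩
    apply cent_diag hane (SU2_mul (SU2_mul (SU2_inv_mem hγ) hh) hγ)
    calc γ⁻¹ * h * γ * D = γ⁻¹ * h * (g * γ) := by rw [hgγ]; noncomm_ring
      _ = γ⁻¹ * (g * h) * γ := by rw [← hc]; noncomm_ring
      _ = D * (γ⁻¹ * h * γ) := by rw [← mul_assoc, hγg]; noncomm_ring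
  · intro ht
    have hhs : h ∈ SU2 := by
      have := conjT_subset_SU2 hγ ((mem_conjT_iff hγ).mpr ht)
      exact this
    refine ⟨hhs, ?_⟩
    have hDT : D ∈ SU2Torus := ⟨a, ha, rfl⟩
    have hcomm : (γ⁻¹ * h * γ) * D = D * (γ⁻¹ * h * γ) := torus_comm ht hDT
    have := congrArg (fun m => γ * m * γ⁻¹) hcomm
    calc h * g = (γ * ((γ⁻¹ * h * γ) * D) * γ⁻¹) := by
          rw [hgd]
          calc h * (γ * D * γ⁻¹) = (γ * (γ⁻¹ * h * γ) * γ⁻¹) * (γ * D * γ⁻¹) := by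
                rw [conj_cancel_left hγ]
            _ = γ * ((γ⁻¹ * h * γ) * (γ⁻¹ * γ) * D) * γ⁻¹ := by noncomm_ring
            _ = γ * ((γ⁻¹ * h * γ) * D) * γ⁻¹ := by rw [SU2_inv_mul hγ]; noncomm_ring
      _ = (γ * (D * (γ⁻¹ * h * γ)) * γ⁻¹) := by rw [hcomm]
      _ = g * h := by
          rw [hgd]
          calc γ * (D * (γ⁻¹ * h * γ)) * γ⁻¹
              = (γ * D * (γ⁻¹ * γ) * (γ⁻¹ * h * γ)) * γ⁻¹ := by rw [SU2_inv_mul hγ]; noncomm_ring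
            _ = (γ * D * γ⁻¹) * (γ * (γ⁻¹ * h * γ) * γ⁻¹) := by noncomm_ring
            _ = (γ * D * γ⁻¹) * h := by rw [conj_cancel_left hγ]

def uMat : M2 := !![0, 1; -1, 0]
def dMat : M2 := Matrix.diagonal ![Complex.I, -Complex.I]

lemma uMat_SU2 : uMat ∈ SU2 := by
  have h := mem_SU2 0 1 (by simp)
  have : !![(0:ℂ), 1; -conj' 1, conj' 0] = uMat := by
    ext i j; fin_cases i <;> fin_cases j <;> simp [uMat]
  rwa [this] at h

lemma dMat_torus : dMat ∈ SU2Torus := by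
  refine ⟨Complex.I, by simp, ?_⟩
  rw [dMat]
  congr 1
  ext i
  fin_cases i <;> simp

lemma dMat_SU2 : dMat ∈ SU2 := torus_subset_SU2 dMat_torus

lemma dMat_ne_one : dMat ≠ 1 := by
  intro h
  have := congrFun (congrFun h 0) 0
  simp [dMat, Matrix.diagonal, Matrix.one_apply] at this
  have := congrArg Complex.im this
  simp at this

lemma dMat_ne_neg_one : dMat ≠ -1 := by
  intro h
  have := congrFun (congrFun h 0) 0
  simp [dMat, Matrix.diagonal, Matrix.one_apply] at this
  have := congrArg Complex.im this
  simp at this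

lemma ud_ne_du : uMat * dMat ≠ dMat * uMat := by
  intro h
  have := congrFun (congrFun h 0) 1
  simp [uMat, dMat, Matrix.mul_apply, Fin.sum_univ_two, Matrix.diagonal] at this
  have h2 := congrArg Complex.im this
  norm_num at h2

lemma torus_central {z : ℂ} (hz : ‖z‖ = 1) (h : z = conj' z) :
    Matrix.diagonal ![z, conj' z] = 1 ∨ Matrix.diagonal ![z, conj' z] = -1 := by
  have him : z.im = 0 := Complex.conj_eq_iff_im.mp h.symm
  have hre : (z.re - 1) * (z.re + 1) = 0 := by
    have : Complex.normSq z = 1 := by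
      have h2 : ‖z‖ ^ 2 = 1 := by rw [hz]; norm_num
      rw [← Complex.normSq_eq_norm_sq] at h2
      exact h2
    rw [Complex.normSq_apply, him] at this
    nlinarith
  rcases mul_eq_zero.mp hre with h1 | h1
  · left
    have hz1 : z = 1 := Complex.ext (by simp; linarith) (by simp [him])
    rw [hz1]
    ext i j; fin_cases i <;> fin_cases j <;> simp [Matrix.diagonal, Matrix.one_apply]
  · right
    have hz1 : z = -1 := Complex.ext (by simp; linarith) (by simp [him])
    rw [hz1]
    ext i j; fin_cases i <;> fin_cases j <;> simp [Matrix.diagonal, Matrix.one_apply]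

/-- Classification of the Howe subgroups of `SU(2)`: if `H` is the centralizer in `SU(2)` of
some subset `S ⊆ SU(2)`, then exactly one of the following holds: `H = SU(2)`; or `H` is
conjugate in `SU(2)` to the diagonal maximal torus; or `H` is the center `{I, −I}`.
Hence `SU(2)` has exactly three conjugacy classes of Howe subgroups, corresponding to the
three strata of the `SU(2)` gauge theory. -/
theorem su2_howe_subgroup_classification
    (S H : Set (Matrix (Fin 2) (Fin 2) ℂ)) (hS : S ⊆ SU2)
    (hH : H = {h | h ∈ SU2 ∧ ∀ s ∈ S, h * s = s * h}) :
    (H = SU2 ∧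
      ¬(∃ γ ∈ SU2, H = (fun x => γ * x * γ⁻¹) '' SU2Torus) ∧
      ¬(H = {g | g = 1 ∨ g = -1})) ∨
    (¬(H = SU2) ∧
      (∃ γ ∈ SU2, H = (fun x => γ * x * γ⁻¹) '' SU2Torus) ∧
      ¬(H = {g | g = 1 ∨ g = -1})) ∨
    (¬(H = SU2) ∧
      ¬(∃ γ ∈ SU2, H = (fun x => γ * x * γ⁻¹) '' SU2Torus) ∧
      H = {g | g = 1 ∨ g = -1}) := by
  subst hH
  set H : Set M2 := {h | h ∈ SU2 ∧ ∀ s ∈ S, h * s = s * h} with hH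
  have hone : (1 : M2) ∈ H := ⟨SU2_one, fun s _ => by rw [one_mul, mul_one]⟩
  have hnegone : (-1 : M2) ∈ H := ⟨SU2_neg_one, fun s _ => by rw [neg_one_mul, mul_neg_one]⟩
  by_cases hcen : ∀ s ∈ S, s = 1 ∨ s = -1
  · -- H = SU2
    have hHSU : H = SU2 := by
      ext h
      constructor
      · exact fun hh => hh.1
      · intro hh
        refine ⟨hh, fun s hs => ?_⟩
        rcases hcen s hs with rfl | rfl
        · rw [one_mul, mul_one]
        · rw [neg_one_mul, mul_neg_one]
    left
    refine ⟨hHSU, ?_, ?_⟩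
    · rintro ⟨γ, hγ, hEq⟩
      rw [hHSU] at hEq
      apply ud_ne_du
      exact conjT_comm hγ (hEq ▸ uMat_SU2) (hEq ▸ dMat_SU2)
    · intro hEq
      have : dMat ∈ H := hHSU ▸ dMat_SU2
      rw [hEq] at this
      rcases this with h | h
      · exact dMat_ne_one h
      · exact dMat_ne_neg_one h
  · push_neg at hcen
    obtain ⟨s₀, hs₀S, hs₀1, hs₀2⟩ := hcen
    have hs₀SU : s₀ ∈ SU2 := hS hs₀S
    by_cases hcen2 : ∀ h ∈ H, h = 1 ∨ h = -1
    · -- H = center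
      have hHC : H = {g : M2 | g = 1 ∨ g = -1} := by
        ext h
        constructor
        · exact fun hh => hcen2 h hh
        · rintro (rfl | rfl)
          · exact hone
          · exact hnegone
      right; right
      refine ⟨?_, ?_, hHC⟩
      · intro hEq
        have : dMat ∈ H := hEq ▸ dMat_SU2
        rcases hcen2 dMat this with h | h
        · exact dMat_ne_one h
        · exact dMat_ne_neg_one h
      · rintro ⟨γ, hγ, hEq⟩
        have hmem : γ * dMat * γ⁻¹ ∈ H := by
          rw [hEq]; exact ⟨dMat, dMat_torus, rfl⟩
        rcases hcen2 _ hmem with h | h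
        · apply dMat_ne_one
          have := congrArg (fun m => γ⁻¹ * m * γ) h
          rw [conj_cancel_right hγ] at this
          rw [this, mul_one, SU2_inv_mul hγ]
        · apply dMat_ne_neg_one
          have := congrArg (fun m => γ⁻¹ * m * γ) h
          rw [conj_cancel_right hγ] at this
          rw [this]
          rw [mul_neg_one, neg_mul, SU2_inv_mul hγ]
    · -- H is a conjugate torus
      push_neg at hcen2
      obtain ⟨h₀, hh₀H, hh₀1, hh₀2⟩ := hcen2
      have hh₀SU : h₀ ∈ SU2 := hh₀H.1
      obtain ⟨γ, hγ, hZ⟩ := cent_noncentral hh₀SU hh₀1 hh₀2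
      -- every element of S lies in Z(h₀) = γ T γ⁻¹
      have hSsub : ∀ s ∈ S, s ∈ (fun x => γ * x * γ⁻¹) '' SU2Torus := by
        intro s hs
        rw [← hZ]
        exact ⟨hS hs, (hh₀H.2 s hs).symm⟩
      have hHT : H = (fun x => γ * x * γ⁻¹) '' SU2Torus := by
        ext h
        constructor
        · rintro ⟨hh, hc⟩
          -- h commutes with s₀, and γ⁻¹ s₀ γ is a noncentral diagonal
          obtain ⟨z, hz, hzd⟩ := (mem_conjT_iff hγ).mp (hSsub s₀ hs₀S)
          have hzne : z ≠ conj' z := by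
            intro hcon
            rcases torus_central hz hcon with h1 | h1
            · apply hs₀1
              have h2 : γ * (γ⁻¹ * s₀ * γ) * γ⁻¹ = s₀ := conj_cancel_left hγ
              rw [hzd, h1, mul_one, SU2_mul_inv hγ] at h2
              exact h2.symm
            · apply hs₀2
              have h2 : γ * (γ⁻¹ * s₀ * γ) * γ⁻¹ = s₀ := conj_cancel_left hγ
              rw [hzd, h1, mul_neg_one, neg_mul, SU2_mul_inv hγ] at h2
              exact h2.symm
          rw [mem_conjT_iff hγ]
          apply cent_diag hzne (SU2_mul (SU2_mul (SU2_inv_mem hγ) hh) hγ)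
          rw [← hzd]
          have hc₀ := hc s₀ hs₀S
          calc γ⁻¹ * h * γ * (γ⁻¹ * s₀ * γ)
              = γ⁻¹ * h * (γ * γ⁻¹) * s₀ * γ := by noncomm_ring
            _ = γ⁻¹ * (h * s₀) * γ := by rw [SU2_mul_inv hγ]; noncomm_ring
            _ = γ⁻¹ * (s₀ * h) * γ := by rw [hc₀]
            _ = γ⁻¹ * s₀ * (γ * γ⁻¹) * h * γ := by rw [SU2_mul_inv hγ]; noncomm_ring
            _ = (γ⁻¹ * s₀ * γ) * (γ⁻¹ * h * γ) := by noncomm_ring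
        · intro hmem
          refine ⟨conjT_subset_SU2 hγ hmem, fun s hs => conjT_comm hγ hmem (hSsub s hs)⟩
      right; left
      refine ⟨?_, ⟨γ, hγ, hHT⟩, ?_⟩
      · intro hEq
        apply ud_ne_du
        have hu : uMat ∈ H := hEq ▸ uMat_SU2
        have hd : dMat ∈ H := hEq ▸ dMat_SU2
        rw [hHT] at hu hd
        exact conjT_comm hγ hu hd
      · intro hEq
        have : h₀ ∈ {g : M2 | g = 1 ∨ g = -1} := hEq ▸ hh₀H
        rcases this with h | h
        · exact hh₀1 h
        · exact hh₀2 h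
end
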